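/- arXiv:1611.00621 — 5 statements merged into one kernel-verified Lean document; each statement's English description precedes it below -/
import Mathlib

section
/- Let (X,T) be a topological dynamical system (X compact metric, T continuous), let x ∈ X, and let μ be an ergodic T-invariant Borel probability measure supported on the orbit closure of x. Then for every ε > 0 and all positive integers p, N there exist positive integers n, m, both divisible by p, with m ≥ N, such that d_BL(E_m(T^n(x)), μ) < ε, where E_m(y) = (1/m) Σ_{j=0}^{m−1} δ_{T^j(y)} is the m-th empirical measure. -/
open MeasureTheory Filter

/-- The bounded-Lipschitz metric on measures defined from a fixed countable
family `f : ℕ → X → ℝ` of test functions. -/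
noncomputable def dBL {X : Type*} [MetricSpace X] [MeasurableSpace X]
    (f : ℕ → X → ℝ) (μ ν : Measure X) : ℝ :=
  ∑' n : ℕ, (1 / 2 : ℝ) ^ (n + 1) * |(∫ x, f n x ∂μ) - ∫ x, f n x ∂ν|

/-- `f` is a countable dense sequence in the unit ball of bounded Lipschitz
functions. -/
def IsBLUnitFamily {X : Type*} [MetricSpace X] (f : ℕ → X → ℝ) : Prop :=
  (∀ n, ∃ L : NNReal, LipschitzWith L (f n) ∧ ∀ x, |f n x| + L ≤ 1) ∧
  (∀ g : X → ℝ, (∃ L : NNReal, LipschitzWith L g ∧ ∀ x, |g x| + L ≤ 1) →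
    ∀ ε > 0, ∃ n, ∀ x, |f n x - g x| ≤ ε)

/-- The `m`-th empirical measure `E_m(y) = (1/m) ∑_{j<m} δ_{T^j y}`. -/
noncomputable def empiricalMeasure {X : Type*} [MeasurableSpace X] (T : X → X) (m : ℕ)
    (y : X) : Measure X :=
  (m : ENNReal)⁻¹ • ∑ j ∈ Finset.range m, Measure.dirac (T^[j] y)

open Function Topology
set_option linter.unusedSectionVars false
set_option linter.unnecessarySimpa false
set_option maxHeartbeats 2000000
set_option synthInstance.maxHeartbeats 1000000

section
variable {X : Type*} [MetricSpace X] [CompactSpace X] [MeasurableSpace X] [BorelSpace X]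
  {T : X → X} {μ : Measure X}

lemma lp_coeFn_sum {ι : Type*} (s : Finset ι) (F : ι → Lp ℝ 2 μ) :
    ⇑(∑ i ∈ s, F i) =ᵐ[μ] fun y => ∑ i ∈ s, F i y := by
  classical
  induction s using Finset.induction with
  | empty => simp only [Finset.sum_empty]; exact Lp.coeFn_zero ℝ 2 μ
  | @insert a s h ih =>
    rw [Finset.sum_insert h]
    filter_upwards [Lp.coeFn_add (F a) (∑ i ∈ s, F i), ih] with y h1 h2
    simp only [h1, Pi.add_apply, h2, Finset.sum_insert h]

variable (T μ) in
noncomputable def koopman (hmp : MeasurePreserving T μ μ) : Lp ℝ 2 μ →L[ℝ] Lp ℝ 2 μ :=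
  LinearMap.mkContinuous
    { toFun := Lp.compMeasurePreserving T hmp
      map_add' := map_add _
      map_smul' := fun c h => Lp.ext <| by
        filter_upwards [Lp.coeFn_compMeasurePreserving (c • h) hmp,
          hmp.quasiMeasurePreserving.ae_eq_comp (Lp.coeFn_smul c h),
          Lp.coeFn_smul c (Lp.compMeasurePreserving T hmp h),
          (Lp.coeFn_compMeasurePreserving h hmp).const_smul c] with y h1 h2 h3 h4
        simp only [h1, comp_apply] at *
        simp only [Pi.smul_apply, comp_apply] at h2 h4 ⊢
        rw [h2, RingHom.id_apply, h3]
        simp only [Pi.smul_apply]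
        rw [h4] }
    1 (fun h => by
      simpa using (Lp.norm_compMeasurePreserving h hmp).le)

lemma koopman_coeFn (hmp : MeasurePreserving T μ μ) (h : Lp ℝ 2 μ) :
    ⇑(koopman T μ hmp h) =ᵐ[μ] ⇑h ∘ T :=
  Lp.coeFn_compMeasurePreserving h hmp

lemma koopman_norm_le (hmp : MeasurePreserving T μ μ) : ‖koopman T μ hmp‖ ≤ 1 :=
  LinearMap.mkContinuous_norm_le _ zero_le_one _

lemma koopman_iterate (hmp : MeasurePreserving T μ μ) {g : X → ℝ} {G : Lp ℝ 2 μ}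
    (hG : ⇑G =ᵐ[μ] g) (j : ℕ) :
    ⇑((koopman T μ hmp)^[j] G) =ᵐ[μ] g ∘ T^[j] := by
  induction j with
  | zero => simpa using hG
  | succ j ih =>
    rw [Function.iterate_succ_apply']
    calc ⇑(koopman T μ hmp ((koopman T μ hmp)^[j] G))
        =ᵐ[μ] ⇑((koopman T μ hmp)^[j] G) ∘ T := koopman_coeFn hmp _
      _ =ᵐ[μ] (g ∘ T^[j]) ∘ T := hmp.quasiMeasurePreserving.ae_eq_comp ih
      _ = g ∘ T^[j + 1] := by rw [Function.comp_assoc, ← Function.iterate_succ]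

lemma nonempty_of_prob [IsProbabilityMeasure μ] : Nonempty X := by
  by_contra h
  rw [not_nonempty_iff] at h
  have h1 := measure_univ (μ := μ)
  rw [Set.univ_eq_empty_iff.mpr h, measure_empty] at h1
  exact zero_ne_one h1

lemma memLp_of_continuous [IsProbabilityMeasure μ] {g : X → ℝ} (hg : Continuous g)
    (p : ENNReal) : MemLp g p μ := by
  have : Nonempty X := nonempty_of_prob (μ := μ)
  obtain ⟨x0, -, hx0⟩ := isCompact_univ.exists_isMaxOn Set.univ_nonempty
    (continuous_abs.comp hg).continuousOn
  exact MemLp.of_bound hg.aestronglyMeasurable (|g x0|)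
    (Eventually.of_forall fun y => by simpa [Real.norm_eq_abs] using hx0 (Set.mem_univ y))

/-- Mean ergodic theorem: L² convergence of Birkhoff averages to the space mean. -/
lemma tendsto_eLpNorm_birkhoffAverage [IsProbabilityMeasure μ]
    (herg : Ergodic T μ) {g : X → ℝ} (hg : Continuous g) :
    Tendsto (fun m => eLpNorm (fun y => birkhoffAverage ℝ T g m y - ∫ z, g z ∂μ) 2 μ)
      atTop (𝓝 0) := by
  haveI : Fact ((1:ENNReal) ≤ 2) := ⟨one_le_two⟩
  set c : ℝ := ∫ z, g z ∂μ with hc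
  have hmp : MeasurePreserving T μ μ := herg.toMeasurePreserving
  set U : Lp ℝ 2 μ →L[ℝ] Lp ℝ 2 μ := koopman T μ hmp with hU
  have hg2 : MemLp g 2 μ := memLp_of_continuous hg 2
  set G : Lp ℝ 2 μ := hg2.toLp g with hG
  set C : Lp ℝ 2 μ := (memLp_const c).toLp (fun _ => c) with hC
  have hCcoe : ⇑C =ᵐ[μ] fun _ => c := MemLp.coeFn_toLp _
  have hGcoe : ⇑G =ᵐ[μ] g := MemLp.coeFn_toLp _
  -- C is a fixed point of U
  have hfix : C ∈ U.eqLocus (1 : Lp ℝ 2 μ →L[ℝ] Lp ℝ 2 μ) := by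
    rw [LinearMap.mem_eqLocus]
    show U C = C
    refine Lp.ext ?_
    calc ⇑(U C) =ᵐ[μ] ⇑C ∘ T := koopman_coeFn hmp C
      _ =ᵐ[μ] (fun _ => c) ∘ T := hmp.quasiMeasurePreserving.ae_eq_comp hCcoe
      _ = fun _ => c := rfl
      _ =ᵐ[μ] ⇑C := hCcoe.symm
  -- orthogonal projection of G is C
  have hproj : ((U.eqLocus (1 : Lp ℝ 2 μ →L[ℝ] Lp ℝ 2 μ)).orthogonalProjectionOnto G :
      Lp ℝ 2 μ) = C := by
    refine Submodule.eq_starProjection_of_mem_of_inner_eq_zero hfix ?_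
    intro w hw
    rw [LinearMap.mem_eqLocus] at hw
    have hwfix : U w = w := hw
    have hweq : ⇑w ∘ T =ᵐ[μ] ⇑w := by
      conv_rhs => rw [← hwfix]
      exact (koopman_coeFn hmp w).symm
    obtain ⟨cw, hcw⟩ := herg.ae_eq_const_of_ae_eq_comp₀
      (Lp.aestronglyMeasurable w).aemeasurable.nullMeasurable hweq
    have hGC : ⇑(G - C) =ᵐ[μ] fun y => g y - c := by
      refine (Lp.coeFn_sub G C).trans ?_
      filter_upwards [hGcoe, hCcoe] with y h2 h3
      simp [h2, h3]
    have hint : Integrable g μ := memLp_one_iff_integrable.mp (memLp_of_continuous hg 1)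
    rw [MeasureTheory.L2.inner_def]
    rw [integral_congr_ae (g := fun y => (g y - c) * cw) ?_]
    · rw [integral_mul_const, integral_sub hint (integrable_const c), integral_const]
      simp [hc]
    · filter_upwards [hGC, hcw] with y h1 h2
      rw [h1, h2]
      simp [RCLike.inner_apply, Function.const, mul_comm]
  have hvn := ContinuousLinearMap.tendsto_birkhoffAverage_orthogonalProjection (𝕜 := ℝ)
    U (koopman_norm_le hmp) G
  rw [hproj] at hvn
  have hnorm : Tendsto (fun m => ‖birkhoffAverage ℝ U _root_.id m G - C‖) atTop (𝓝 0) := by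
    simpa using (hvn.sub (tendsto_const_nhds (x := C))).norm
  have key : ∀ m : ℕ, eLpNorm (fun y => birkhoffAverage ℝ T g m y - c) 2 μ =
      ENNReal.ofReal ‖birkhoffAverage ℝ U _root_.id m G - C‖ := by
    intro m
    have hBm : ⇑(birkhoffAverage ℝ U _root_.id m G) =ᵐ[μ]
        fun y => birkhoffAverage ℝ T g m y := by
      have hsum : ⇑(∑ j ∈ Finset.range m, U^[j] G) =ᵐ[μ]
          fun y => ∑ j ∈ Finset.range m, (g ∘ T^[j]) y := by
        refine (lp_coeFn_sum (Finset.range m) (fun j => U^[j] G)).trans ?_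
        have h2 : ∀ᶠ y in ae μ, ∀ j ∈ Finset.range m, ((⇑U)^[j] G : Lp ℝ 2 μ) y = (g ∘ T^[j]) y :=
          (eventually_all_finset (Finset.range m)).2 (fun j _ => koopman_iterate hmp hGcoe j)
        filter_upwards [h2] with y hy
        exact Finset.sum_congr rfl fun j hj => hy j hj
      have : birkhoffAverage ℝ U _root_.id m G =
          (m : ℝ)⁻¹ • ∑ j ∈ Finset.range m, U^[j] G := by
        simp [birkhoffAverage, birkhoffSum]
      rw [this]
      filter_upwards [Lp.coeFn_smul ((m : ℝ)⁻¹) (∑ j ∈ Finset.range m, U^[j] G), hsum]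
        with y h1 h2
      simp only [h1, Pi.smul_apply, h2, birkhoffAverage, birkhoffSum, comp_apply]
    have hae : (fun y => birkhoffAverage ℝ T g m y - c) =ᵐ[μ]
        ⇑(birkhoffAverage ℝ U _root_.id m G - C) := by
      refine EventuallyEq.symm ((Lp.coeFn_sub (birkhoffAverage ℝ U _root_.id m G) C).trans ?_)
      filter_upwards [hBm, hCcoe] with y h2 h3
      simp [h2, h3]
    rw [eLpNorm_congr_ae hae, Lp.norm_def,
      ENNReal.ofReal_toReal (Lp.eLpNorm_ne_top _)]
  refine Tendsto.congr (fun m => (key m).symm) ?_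
  have := ENNReal.tendsto_ofReal hnorm
  simpa using this
lemma continuous_birkhoffAverage (hT : Continuous T) {g : X → ℝ} (hg : Continuous g) (m : ℕ) :
    Continuous (fun y => birkhoffAverage ℝ T g m y) := by
  have : Continuous (fun y => birkhoffSum T g m y) :=
    continuous_finset_sum _ (fun k _ => hg.comp (hT.iterate k))
  exact this.const_smul ((m : ℝ)⁻¹)

lemma tendsto_measure_bad [IsProbabilityMeasure μ] (herg : Ergodic T μ) (hT : Continuous T)
    {g : X → ℝ} (hg : Continuous g) {δ : ℝ} (hδ : 0 < δ) :
    Tendsto (fun m => μ {y | δ ≤ |birkhoffAverage ℝ T g m y - ∫ z, g z ∂μ|}) atTop (𝓝 0) := by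
  set c : ℝ := ∫ z, g z ∂μ
  set F : ℕ → X → ℝ := fun m y => birkhoffAverage ℝ T g m y - c with hF
  have hFm : ∀ m, Continuous (F m) := fun m =>
    (continuous_birkhoffAverage hT hg m).sub continuous_const
  have hL2 : Tendsto (fun m => eLpNorm (F m) 2 μ) atTop (𝓝 0) :=
    tendsto_eLpNorm_birkhoffAverage herg hg
  have hδ' : (ENNReal.ofReal δ) ≠ 0 := (ENNReal.ofReal_pos.2 hδ).ne'
  set a : ENNReal := (ENNReal.ofReal δ)⁻¹ ^ (2 : ℕ) with ha
  have ha_ne : a ≠ ⊤ := by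
    rw [ha]
    exact ENNReal.pow_ne_top (ENNReal.inv_ne_top.2 hδ')
  have hbound : ∀ m, μ {y | δ ≤ |F m y|} ≤ a * eLpNorm (F m) 2 μ ^ (2 : ℕ) := by
    intro m
    have h1 := meas_ge_le_mul_pow_eLpNorm_enorm μ (p := 2) two_ne_zero ENNReal.ofNat_ne_top
      (hFm m).aestronglyMeasurable hδ' (by simp)
    have hset : {y | δ ≤ |F m y|} = {y | ENNReal.ofReal δ ≤ ‖F m y‖ₑ} := by
      ext y
      simp only [Set.mem_setOf_eq, ← ofReal_norm, Real.norm_eq_abs]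
      exact (ENNReal.ofReal_le_ofReal_iff (abs_nonneg _)).symm
    rw [hset]
    have h2 : ((2 : ENNReal).toReal) = ((2 : ℕ) : ℝ) := by simp
    rwa [h2, ENNReal.rpow_natCast, ENNReal.rpow_natCast] at h1
  have hRHS : Tendsto (fun m => a * eLpNorm (F m) 2 μ ^ (2 : ℕ)) atTop (𝓝 0) := by
    have hpow : Tendsto (fun m => eLpNorm (F m) 2 μ ^ (2 : ℕ)) atTop (𝓝 0) := by
      have := ((ENNReal.continuous_pow 2).tendsto 0).comp hL2
      simpa [Function.comp_def] using this
    have := ENNReal.Tendsto.const_mul (a := a) hpow (Or.inr ha_ne)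
    simpa using this
  exact tendsto_of_tendsto_of_tendsto_of_le_of_le tendsto_const_nhds hRHS
    (fun m => zero_le) hbound

lemma abs_birkhoffAverage_le {g : X → ℝ} (hgb : ∀ x, |g x| ≤ 1) (m : ℕ) (y : X) :
    |birkhoffAverage ℝ T g m y| ≤ 1 := by
  rcases Nat.eq_zero_or_pos m with hm | hm
  · simp [hm, birkhoffAverage]
  · have h1 : |birkhoffSum T g m y| ≤ m := by
      refine (Finset.abs_sum_le_sum_abs _ _).trans ?_
      calc ∑ k ∈ Finset.range m, |g (T^[k] y)| ≤ ∑ _k ∈ Finset.range m, 1 :=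
            Finset.sum_le_sum fun k _ => hgb _
        _ = m := by simp
    have : |birkhoffAverage ℝ T g m y| = (m : ℝ)⁻¹ * |birkhoffSum T g m y| := by
      rw [birkhoffAverage, smul_eq_mul, abs_mul, abs_inv, Nat.abs_cast]
    rw [this]
    calc (m : ℝ)⁻¹ * |birkhoffSum T g m y| ≤ (m : ℝ)⁻¹ * m := by gcongr
      _ = 1 := inv_mul_cancel₀ (Nat.cast_ne_zero.2 hm.ne')
  
lemma abs_birkhoffAverage_shift_le {g : X → ℝ} (hgb : ∀ x, |g x| ≤ 1) {m : ℕ} (hm : 0 < m)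
    (s : ℕ) (y : X) :
    |birkhoffAverage ℝ T g m (T^[s] y) - birkhoffAverage ℝ T g m y| ≤ 2 * s / m := by
  induction s with
  | zero => simp
  | succ s ih =>
    have h1 : |birkhoffAverage ℝ T g m (T^[s+1] y) - birkhoffAverage ℝ T g m (T^[s] y)|
        ≤ 2 / m := by
      rw [Function.iterate_succ_apply', ← Real.dist_eq,
        dist_birkhoffAverage_apply_birkhoffAverage ℝ T g m (T^[s] y)]
      have h2 : dist (g (T^[m] (T^[s] y))) (g (T^[s] y)) ≤ 2 := by
        rw [Real.dist_eq]
        calc |g (T^[m] (T^[s] y)) - g (T^[s] y)| ≤ |g (T^[m] (T^[s] y))| + |g (T^[s] y)| :=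
              abs_sub _ _
          _ ≤ 2 := by linarith [hgb (T^[s] y), hgb (T^[m] (T^[s] y))]
      gcongr
    calc |birkhoffAverage ℝ T g m (T^[s+1] y) - birkhoffAverage ℝ T g m y|
        ≤ |birkhoffAverage ℝ T g m (T^[s+1] y) - birkhoffAverage ℝ T g m (T^[s] y)|
          + |birkhoffAverage ℝ T g m (T^[s] y) - birkhoffAverage ℝ T g m y| := by
          have := abs_sub_abs_le_abs_sub (birkhoffAverage ℝ T g m (T^[s+1] y)) 0
          exact abs_sub_le _ _ _
      _ ≤ 2 / m + 2 * s / m := add_le_add h1 ih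
      _ = 2 * ((s+1 : ℕ) : ℝ) / m := by push_cast; ring
  
lemma integral_empiricalMeasure {g : X → ℝ} (hg : Continuous g) (m : ℕ) (w : X) :
    ∫ z, g z ∂((m : ENNReal)⁻¹ • ∑ j ∈ Finset.range m, Measure.dirac (T^[j] w))
      = birkhoffAverage ℝ T g m w := by
  have hint : ∀ j ∈ Finset.range m, Integrable g (Measure.dirac (T^[j] w)) := by
    intro j _
    refine ⟨hg.aestronglyMeasurable, ?_⟩
    show (∫⁻ z, ‖g z‖₊ ∂(Measure.dirac (T^[j] w))) < ⊤
    rw [lintegral_dirac]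
    exact ENNReal.coe_lt_top
  rw [integral_smul_measure, integral_finset_sum_measure hint]
  have : ∀ j ∈ Finset.range m, ∫ z, g z ∂(Measure.dirac (T^[j] w)) = g (T^[j] w) :=
    fun j _ => integral_dirac g _
  rw [Finset.sum_congr rfl this]
  simp [birkhoffAverage, birkhoffSum, ENNReal.toReal_inv]

end

theorem stmt3 {X : Type*} [MetricSpace X] [CompactSpace X] [MeasurableSpace X] [BorelSpace X]
    (f : ℕ → X → ℝ) (hf : IsBLUnitFamily f)
    (T : X → X) (hT : Continuous T) (x : X)
    (μ : Measure X) (hprob : IsProbabilityMeasure μ) (herg : Ergodic T μ)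
    (hsupp : μ (closure (Set.range fun n => T^[n] x)) = 1)
    (ε : ℝ) (hε : 0 < ε) (p N : ℕ) (hp : 0 < p) (hN : 0 < N) :
    ∃ n m : ℕ, 0 < n ∧ 0 < m ∧ p ∣ n ∧ p ∣ m ∧ N ≤ m ∧
      dBL f (empiricalMeasure T m (T^[n] x)) μ < ε := by
  classical
  haveI := hprob
  set c : ℕ → ℝ := fun j => ∫ z, f j z ∂μ with hcdef
  -- basic facts about the test functions
  have hfb : ∀ j y, |f j y| ≤ 1 := by
    intro j y
    obtain ⟨L, hL, hb⟩ := hf.1 j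
    have h1 := hb y
    have h2 : (0:ℝ) ≤ L := L.coe_nonneg
    linarith
  have hflip : ∀ j (a b : X), |f j a - f j b| ≤ dist a b := by
    intro j a b
    obtain ⟨L, hL, hb⟩ := hf.1 j
    have hL1 : (L : ℝ) ≤ 1 := by
      have h1 := hb a
      have h2 := abs_nonneg (f j a)
      linarith
    calc |f j a - f j b| = dist (f j a) (f j b) := (Real.dist_eq _ _).symm
      _ ≤ L * dist a b := hL.dist_le_mul a b
      _ ≤ 1 * dist a b := mul_le_mul_of_nonneg_right hL1 dist_nonneg
      _ = dist a b := one_mul _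
  have hfc : ∀ j, Continuous (f j) := fun j => (hf.1 j).choose_spec.1.continuous
  have hcb : ∀ j, |c j| ≤ 1 := by
    intro j
    have hint : Integrable (fun z => |f j z|) μ :=
      memLp_one_iff_integrable.mp (memLp_of_continuous ((hfc j).abs) 1)
    calc |c j| ≤ ∫ z, |f j z| ∂μ := by
          simpa [Real.norm_eq_abs] using norm_integral_le_integral_norm (μ := μ) (f := fun z => f j z)
      _ ≤ ∫ _z, (1:ℝ) ∂μ := integral_mono hint (integrable_const 1) (fun z => hfb j z)
      _ = 1 := by simp
  -- choose K with small tail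
  obtain ⟨K, hK⟩ : ∃ K : ℕ, 2 * (1/2:ℝ)^K < ε/2 := by
    obtain ⟨K, hK⟩ := exists_pow_lt_of_lt_one (show (0:ℝ) < ε/4 by linarith)
      (show (1/2 : ℝ) < 1 by norm_num)
    exact ⟨K, by linarith⟩
  have hε6 : (0:ℝ) < ε/6 := by linarith
  -- eventual conditions on m
  have hEV1 : ∀ᶠ m : ℕ in atTop, ∀ j ∈ Finset.range K,
      μ {y | ε/6 ≤ |birkhoffAverage ℝ T (f j) m y - c j|} < (((2*(K+1) : ℕ)) : ENNReal)⁻¹ :=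
    (eventually_all_finset _).2 fun j _ =>
      (tendsto_measure_bad herg hT (hfc j) hε6).eventually_lt_const
        (ENNReal.inv_pos.2 (ENNReal.natCast_ne_top _))
  have hEV2 : ∀ᶠ m : ℕ in atTop, 2 * (p:ℝ) / m < ε/6 :=
    (tendsto_const_div_atTop_nhds_zero_nat (2 * (p:ℝ))).eventually_lt_const hε6
  have hEV3 : ∀ᶠ m : ℕ in atTop, N ≤ m := eventually_ge_atTop N
  have hpm : Tendsto (fun M : ℕ => p * M) atTop atTop :=
    tendsto_atTop_mono (fun M => Nat.le_mul_of_pos_left M hp) tendsto_id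
  obtain ⟨M, hMall, hM1⟩ :=
    ((hpm.eventually ((hEV1.and hEV2).and hEV3)).and (eventually_ge_atTop 1)).exists
  obtain ⟨⟨hbad, hshift⟩, hNm⟩ := hMall
  set m : ℕ := p * M with hmdef
  have hm0 : 0 < m := Nat.mul_pos hp hM1
  have hm1 : (1:ℝ) ≤ m := by exact_mod_cast hm0
  -- find a good generic point y in the orbit closure
  set Bad : Set X := ⋃ j ∈ Finset.range K,
    {y | ε/6 ≤ |birkhoffAverage ℝ T (f j) m y - c j|} with hBadDef
  have hBadlt : μ Bad < 1 := by
    calc μ Bad ≤ ∑ j ∈ Finset.range K,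
          μ {y | ε/6 ≤ |birkhoffAverage ℝ T (f j) m y - c j|} := measure_biUnion_finset_le _ _
      _ ≤ ∑ _j ∈ Finset.range K, (((2*(K+1) : ℕ)) : ENNReal)⁻¹ :=
          Finset.sum_le_sum fun j hj => (hbad j hj).le
      _ = (K : ENNReal) * (((2*(K+1) : ℕ)) : ENNReal)⁻¹ := by
          simp [mul_comm]
      _ < 1 := by
          have hlt : (K : ENNReal) < ((2*(K+1) : ℕ) : ENNReal) := by
            exact_mod_cast (by omega : K < 2*(K+1))
          have hne0 : ((2*(K+1) : ℕ) : ENNReal) ≠ 0 := by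
            exact_mod_cast (by omega : (2*(K+1) : ℕ) ≠ 0)
          have hnetop : ((2*(K+1) : ℕ) : ENNReal) ≠ ⊤ := ENNReal.natCast_ne_top _
          calc (K : ENNReal) * (((2*(K+1) : ℕ)) : ENNReal)⁻¹
              < ((2*(K+1) : ℕ) : ENNReal) * (((2*(K+1) : ℕ)) : ENNReal)⁻¹ := by
                exact (ENNReal.mul_lt_mul_left (ENNReal.inv_ne_zero.2 hnetop)
                  (ENNReal.inv_ne_top.2 hne0) hlt)
            _ = 1 := ENNReal.mul_inv_cancel hne0 hnetop
  have hne : (closure (Set.range fun k => T^[k] x) \ Bad).Nonempty := by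
    by_contra h
    rw [Set.not_nonempty_iff_eq_empty, Set.diff_eq_empty] at h
    exact absurd (hsupp ▸ (measure_mono h).trans_lt hBadlt) (lt_irrefl _)
  obtain ⟨y, hycl, hyBad⟩ := hne
  have hygood : ∀ j, j < K → |birkhoffAverage ℝ T (f j) m y - c j| < ε/6 := by
    intro j hj
    by_contra h
    push_neg at h
    exact hyBad (Set.mem_biUnion (Finset.mem_range.2 hj) h)
  -- continuity radius δ
  set g₀ : X → ℝ := fun z => ∑ i ∈ Finset.range (m + p), dist (T^[i] z) (T^[i] y) with hg₀def
  have hg₀cont : Continuous g₀ :=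
    continuous_finset_sum _ fun i _ => (hT.iterate i).dist continuous_const
  have hg₀y : g₀ y = 0 := by simp [hg₀def]
  have hnhds : g₀ ⁻¹' (Set.Iio (ε/6)) ∈ 𝓝 y :=
    hg₀cont.continuousAt.preimage_mem_nhds (by rw [hg₀y]; exact Iio_mem_nhds hε6)
  obtain ⟨δ, hδpos, hball⟩ := Metric.mem_nhds_iff.1 hnhds
  obtain ⟨z', ⟨k, hk⟩, hdz⟩ := Metric.mem_closure_iff.1 hycl δ hδpos
  simp only at hk
  -- choose the shift s and time n
  have hr : k % p < p := Nat.mod_lt _ hp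
  have hdm : p * (k / p) + k % p = k := Nat.div_add_mod k p
  set s : ℕ := p - k % p with hsdef
  set n : ℕ := s + k with hndef
  have hs1 : 1 ≤ s := by omega
  have hsp : s ≤ p := by omega
  have hn0 : 0 < n := by omega
  have hdvd : p ∣ n := by
    refine ⟨k / p + 1, ?_⟩
    rw [Nat.mul_succ]
    obtain ⟨t, ht⟩ : ∃ t, p * (k / p) = t := ⟨_, rfl⟩
    rw [ht]
    rw [ht] at hdm
    omega
  have hTnx : T^[n] x = T^[s] z' := by
    rw [hndef, Function.iterate_add_apply, hk]
  have hz'ball : g₀ z' < ε/6 := by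
    have : z' ∈ g₀ ⁻¹' (Set.Iio (ε/6)) := by
      apply hball
      rw [Metric.mem_ball, dist_comm]
      exact hdz
    exact this
  have hg₀nonneg : 0 ≤ g₀ z' := Finset.sum_nonneg fun i _ => dist_nonneg
  -- per-term estimates for j < K
  have hterm : ∀ j, j < K →
      |birkhoffAverage ℝ T (f j) m (T^[n] x) - c j| ≤ ε/2 := by
    intro j hj
    have hp1 : |birkhoffAverage ℝ T (f j) m (T^[s] z') - birkhoffAverage ℝ T (f j) m (T^[s] y)|
        ≤ g₀ z' := by
      rw [← Real.dist_eq]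
      refine (dist_birkhoffAverage_birkhoffAverage_le ℝ T (f j) m (T^[s] z') (T^[s] y)).trans ?_
      have h2 : ∑ k' ∈ Finset.range m, dist (f j (T^[k'] (T^[s] z'))) (f j (T^[k'] (T^[s] y)))
          ≤ ∑ k' ∈ Finset.range m, dist (T^[s+k'] z') (T^[s+k'] y) := by
        refine Finset.sum_le_sum fun k' _ => ?_
        rw [← Function.iterate_add_apply T k' s z', ← Function.iterate_add_apply T k' s y,
          Real.dist_eq, Nat.add_comm k' s]
        exact hflip j _ _
      have h3 : ∑ k' ∈ Finset.range m, dist (T^[s+k'] z') (T^[s+k'] y) ≤ g₀ z' := by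
        have heq : ∑ i ∈ Finset.Ico s (m+s), dist (T^[i] z') (T^[i] y)
            = ∑ k' ∈ Finset.range (m+s-s), dist (T^[s+k'] z') (T^[s+k'] y) := by
          rw [Finset.sum_Ico_eq_sum_range]
        rw [Nat.add_sub_cancel] at heq
        rw [← heq, hg₀def]
        refine Finset.sum_le_sum_of_subset_of_nonneg ?_ (fun i _ _ => dist_nonneg)
        intro i hi
        rw [Finset.mem_range]
        have := (Finset.mem_Ico.1 hi).2
        omega
      calc (∑ k' ∈ Finset.range m, dist (f j (T^[k'] (T^[s] z'))) (f j (T^[k'] (T^[s] y)))) / m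
          ≤ (g₀ z') / m := by
            exact (div_le_div_iff_of_pos_right (by exact_mod_cast hm0 : (0:ℝ) < m)).2 (h2.trans h3)
        _ ≤ g₀ z' := div_le_self hg₀nonneg hm1
    have hp2 : |birkhoffAverage ℝ T (f j) m (T^[s] y) - birkhoffAverage ℝ T (f j) m y|
        ≤ 2 * s / m := abs_birkhoffAverage_shift_le (hfb j) hm0 s y
    have hp2' : 2 * (s:ℝ) / m ≤ 2 * (p:ℝ) / m := by
      gcongr
    have hp3 := hygood j hj
    rw [hTnx]
    have h4 := abs_sub_le (birkhoffAverage ℝ T (f j) m (T^[s] z'))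
      (birkhoffAverage ℝ T (f j) m y) (c j)
    have h5 := abs_sub_le (birkhoffAverage ℝ T (f j) m (T^[s] z'))
      (birkhoffAverage ℝ T (f j) m (T^[s] y)) (birkhoffAverage ℝ T (f j) m y)
    linarith
  -- assemble
  refine ⟨n, m, hn0, hm0, hdvd, ⟨M, rfl⟩, hNm, ?_⟩
  have hemp : ∀ j, ∫ z, f j z ∂(empiricalMeasure T m (T^[n] x))
      = birkhoffAverage ℝ T (f j) m (T^[n] x) :=
    fun j => integral_empiricalMeasure (hfc j) m (T^[n] x)
  set A : ℕ → ℝ := fun j => birkhoffAverage ℝ T (f j) m (T^[n] x) with hA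
  set u : ℕ → ℝ := fun j => (1/2:ℝ)^(j+1) * |A j - c j| with hu
  have hdbl : dBL f (empiricalMeasure T m (T^[n] x)) μ = ∑' j, u j := by
    unfold dBL
    exact tsum_congr fun j => by rw [hemp j]
  have hAle : ∀ j, |A j - c j| ≤ 2 := by
    intro j
    have h1 := abs_birkhoffAverage_le (T := T) (hfb j) m (T^[n] x)
    have h2 := hcb j
    have h3 := abs_sub (A j) (c j)
    exact h3.trans (by rw [hA]; linarith)
  have hu0 : ∀ j, 0 ≤ u j := fun j => by rw [hu]; positivity
  have hgeom : Summable (fun j : ℕ => (1/2:ℝ)^(j+1)) :=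
    (summable_geometric_two.mul_right (1/2)).congr fun j => (pow_succ _ j).symm
  have husum : Summable u := Summable.of_nonneg_of_le hu0
    (fun j => by rw [hu]; exact mul_le_mul_of_nonneg_left (hAle j) (by positivity))
    (hgeom.mul_right 2)
  rw [hdbl, ← husum.sum_add_tsum_nat_add K]
  have hsum1 : ∑ j ∈ Finset.range K, ((1/2:ℝ))^(j+1) ≤ 1 := by
    have h1 := Summable.sum_le_tsum (Finset.range K) (fun i _ => by positivity) hgeom
    have h2 : ∑' (j:ℕ), ((1/2:ℝ))^(j+1) = 1 := by
      calc ∑' (j:ℕ), ((1/2:ℝ))^(j+1) = ∑' (j:ℕ), ((1/2:ℝ))^j * (1/2) :=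
            tsum_congr fun j => pow_succ _ _
        _ = 2 * (1/2) := by rw [tsum_mul_right, tsum_geometric_two]
        _ = 1 := by norm_num
    linarith
  have hhead : ∑ j ∈ Finset.range K, u j ≤ ε/2 := by
    calc ∑ j ∈ Finset.range K, u j
        ≤ ∑ j ∈ Finset.range K, (1/2:ℝ)^(j+1) * (ε/2) := by
          refine Finset.sum_le_sum fun j hj => ?_
          rw [hu]
          refine mul_le_mul_of_nonneg_left ?_ (by positivity)
          have := hterm j (Finset.mem_range.1 hj)
          rw [hA]
          exact this
      _ = (∑ j ∈ Finset.range K, (1/2:ℝ)^(j+1)) * (ε/2) := by rw [Finset.sum_mul]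
      _ ≤ 1 * (ε/2) := mul_le_mul_of_nonneg_right hsum1 (by linarith)
      _ = ε/2 := one_mul _
  have htail : ∑' i, u (i+K) ≤ 2*(1/2:ℝ)^K := by
    have hb : ∀ i, u (i+K) ≤ (1/2:ℝ)^K * (1/2)^i := by
      intro i
      rw [hu]
      calc (1/2:ℝ)^(i+K+1) * |A (i+K) - c (i+K)| ≤ (1/2:ℝ)^(i+K+1) * 2 :=
            mul_le_mul_of_nonneg_left (hAle _) (by positivity)
        _ = (1/2:ℝ)^K * (1/2)^i := by ring
    calc ∑' i, u (i+K) ≤ ∑' i, (1/2:ℝ)^K * (1/2)^i :=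
          ((summable_nat_add_iff K).2 husum).tsum_le_tsum hb
            (summable_geometric_two.mul_left _)
      _ = (1/2:ℝ)^K * 2 := by rw [tsum_mul_left, tsum_geometric_two]
      _ = 2*(1/2:ℝ)^K := by ring
  linarith
end

section
/- Let (X,T) be a dynamical system with the shadowing property. Let ε > 0 and let δ > 0 be such that every δ-pseudo-orbit is ε-traced. If x ∈ X satisfies d(T^n(x), x) < δ for some n ∈ ℕ, then for every ξ > 0 there exist x' ∈ X and a positive integer n' divisible by n such that (a) d(T^{n'}(x'), x') < ξ, and (b) d(T^{jn+i}(x'), T^i(x)) ≤ ε for all i = 0,…,n−1 and all j ≥ 0. -/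
open Filter

/-- `(X,T)` has the shadowing property: for every `ε > 0` there is `δ > 0` such
that every `δ`-pseudo-orbit is `ε`-traced by an actual orbit. -/
def ShadowingProperty {X : Type*} [MetricSpace X] (T : X → X) : Prop :=
  ∀ ε > (0 : ℝ), ∃ δ > (0 : ℝ), ∀ x : ℕ → X,
    (∀ k, dist (T (x k)) (x (k + 1)) < δ) → ∃ y : X, ∀ k, dist (T^[k] y) (x k) < ε

theorem stmt5 {X : Type*} [MetricSpace X] [CompactSpace X]
    (T : X → X) (hT : Continuous T) (hsh : ShadowingProperty T)
    (ε δ : ℝ) (hε : 0 < ε) (hδpos : 0 < δ)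
    (hδ : ∀ x : ℕ → X, (∀ k, dist (T (x k)) (x (k + 1)) < δ) →
      ∃ y : X, ∀ k, dist (T^[k] y) (x k) < ε)
    (x : X) (n : ℕ) (hn : 0 < n) (hx : dist (T^[n] x) x < δ)
    (ξ : ℝ) (hξ : 0 < ξ) :
    ∃ (x' : X) (n' : ℕ), 0 < n' ∧ n ∣ n' ∧ dist (T^[n'] x') x' < ξ ∧
      ∀ j : ℕ, ∀ i < n, dist (T^[j * n + i] x') (T^[i] x) ≤ ε := by
  -- the periodic pseudo-orbit
  set p : ℕ → X := fun k => T^[k % n] x with hp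
  have hpo : ∀ k, dist (T (p k)) (p (k + 1)) < δ := by
    intro k
    have hlt : k % n < n := Nat.mod_lt _ hn
    have hmod : (k + 1) % n = (k % n + 1) % n :=
      ((Nat.mod_modEq k n).add_right 1).symm
    have hiter : T (p k) = T^[k % n + 1] x := (Function.iterate_succ_apply' T _ x).symm
    rcases Nat.lt_or_ge (k % n + 1) n with h | h
    · have : (k + 1) % n = k % n + 1 := by rw [hmod, Nat.mod_eq_of_lt h]
      rw [hiter]; simp only [hp, this, hiter, dist_self]
      exact hδpos
    · have hn' : k % n + 1 = n := by omega
      have : (k + 1) % n = 0 := by rw [hmod, hn', Nat.mod_self]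
      rw [hiter]; simp only [hp, this, hiter, hn', Function.iterate_zero_apply]
      exact hx
  obtain ⟨y, hy⟩ := hδ p hpo
  -- the orbit of y under T^[n]
  set f : ℕ → X := fun j => T^[j * n] y with hf
  obtain ⟨a, -, φ, hφ, hconv⟩ :=
    isCompact_univ.tendsto_subseq (x := f) (fun j => Set.mem_univ _)
  rw [Metric.tendsto_atTop] at hconv
  obtain ⟨N, hN⟩ := hconv (ξ / 2) (by linarith)
  have h1 : dist (f (φ N)) a < ξ / 2 := hN N le_rfl
  have h2 : dist (f (φ (N + 1))) a < ξ / 2 := hN (N + 1) (Nat.le_succ _)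
  have hφlt : φ N < φ (N + 1) := hφ (Nat.lt_succ_self N)
  set j0 := φ N
  set m := φ (N + 1) - φ N with hm
  have hmpos : 0 < m := Nat.sub_pos_of_lt hφlt
  have hmj : m + j0 = φ (N + 1) := Nat.sub_add_cancel hφlt.le
  refine ⟨f j0, m * n, Nat.mul_pos hmpos hn, ⟨m, mul_comm m n⟩, ?_, ?_⟩
  · have : T^[m * n] (f j0) = f (φ (N + 1)) := by
      simp only [hf, ← Function.iterate_add_apply, ← Nat.add_mul, hmj]
    rw [this]
    calc dist (f (φ (N + 1))) (f j0)
        ≤ dist (f (φ (N + 1))) a + dist (f j0) a := dist_triangle_right _ _ _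
      _ < ξ := by linarith
  · intro j i hi
    have hiter : T^[j * n + i] (f j0) = T^[(j + j0) * n + i] y := by
      simp only [hf, ← Function.iterate_add_apply]
      ring_nf
    have hmod : ((j + j0) * n + i) % n = i := by
      simp [Nat.add_mod, Nat.mul_mod_left, Nat.mod_eq_of_lt hi]
    have := hy ((j + j0) * n + i)
    rw [hiter]
    simp only [hp, hmod] at this
    exact this.le
end

section
/- Let (X,T) be a dynamical system with the shadowing property. Let ε > 0 and let δ > 0 be provided for ε/4 by the shadowing property. If x ∈ X satisfies d(T^n(x), x) < δ for some n ∈ ℕ, then there exists a point z ∈ X such that (1) z is regularly recurrent and the orbit closure of z with T restricted to it is an odometer (a minimal equicontinuous system with a regularly recurrent transitive point), and (2) d(T^{jn+i}(z), T^i(x)) ≤ ε for all j ≥ 0 and i = 0,1,…,n−1. -/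
open Filter

/-- `z` is regularly recurrent: for every neighborhood `U` of `z` there is
`k ≥ 1` with `T^{kn}(z) ∈ U` for all `n`. -/
def RegularlyRecurrent {X : Type*} [TopologicalSpace X] (T : X → X) (z : X) : Prop :=
  ∀ U ∈ nhds z, ∃ k : ℕ, 0 < k ∧ ∀ n : ℕ, T^[k * n] z ∈ U

/-- A dynamical system is an odometer if it is equicontinuous and has a
regularly recurrent point with dense orbit. -/
def IsOdometer {Y : Type*} [MetricSpace Y] (S : Y → Y) : Prop :=
  Equicontinuous (fun n : ℕ => S^[n]) ∧
    ∃ z : Y, RegularlyRecurrent S z ∧ Dense (Set.range fun n => S^[n] z)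

/-- The orbit closure of `z`. -/
def orbitClosure {X : Type*} [TopologicalSpace X] (T : X → X) (z : X) : Set X :=
  closure (Set.range fun n => T^[n] z)

set_option linter.unusedSectionVars false

section Aux
variable {X : Type*} [MetricSpace X] [CompactSpace X] {T : X → X}

lemma small_level {ε : ℝ} (hε : 0 < ε) : ∀ r > (0:ℝ), ∃ m : ℕ, ε / 4 ^ (m + 1) < r := by
  intro r hr
  obtain ⟨m₀, hm₀⟩ := exists_pow_lt_of_lt_one (x := r / ε) (y := (1:ℝ)/4)
    (by positivity) (by norm_num)
  refine ⟨m₀, ?_⟩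
  have h1 : ε / 4 ^ (m₀ + 1) ≤ ε * (1 / 4 : ℝ) ^ m₀ := by
    rw [div_eq_mul_inv]
    refine mul_le_mul_of_nonneg_left ?_ hε.le
    rw [← one_div, one_div_pow]
    exact one_div_le_one_div_of_le (by positivity) (pow_le_pow_right₀ (by norm_num) (Nat.le_succ m₀))
  have h2 : ε * (1 / 4 : ℝ) ^ m₀ < r := by
    have := (mul_lt_mul_iff_right₀ hε).2 hm₀
    rwa [mul_div_cancel₀ _ (ne_of_gt hε)] at this
  linarith

lemma periodic_pseudo {δ' : ℝ} {w : X} {p : ℕ} (hp : 0 < p)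
    (hw : dist (T^[p] w) w < δ') :
    ∀ k : ℕ, dist (T ((fun t => T^[t % p] w) k)) ((fun t => T^[t % p] w) (k + 1)) < δ' := by
  intro k
  have hlt : k % p < p := Nat.mod_lt _ hp
  have hmod : (k % p + 1) % p = (k + 1) % p := Nat.mod_add_mod k p 1 ▸ rfl
  have h2 : T ((fun t => T^[t % p] w) k) = T^[k % p + 1] w :=
    (Function.iterate_succ_apply' T (k % p) w).symm
  rcases eq_or_lt_of_le (Nat.succ_le_of_lt hlt) with h | h
  · have h' : k % p + 1 = p := h
    have h1 : (k + 1) % p = 0 := by rw [← hmod, h', Nat.mod_self]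
    simp only [h1, h2, h']
    simpa using hw
  · have h1 : (k + 1) % p = k % p + 1 := by rw [← hmod, Nat.mod_eq_of_lt h]
    simp only [h1, h2]
    rw [dist_self]
    exact lt_of_le_of_lt dist_nonneg hw

/-- Shadowing step: from an almost-periodic point produce a new point tracing a
periodic pseudo-orbit through a multiple period. -/
lemma step_lemma (hsh : ShadowingProperty T) (w : X) (p : ℕ) (hp : 0 < p)
    (η : ℝ) (hη : 0 < η) :
    ∃ (w' : X) (p' : ℕ), 0 < p' ∧ p ∣ p' ∧
      (∀ t, ∃ s, s % p = t % p ∧ dist (T^[t] w') (T^[s] w) < η) ∧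
      (∀ a b, a % p' = b % p' → dist (T^[a] w') (T^[b] w') < 2 * η) := by
  obtain ⟨δ', hδ'pos, H⟩ := hsh η hη
  obtain ⟨c, φ, hφ, hconv⟩ := CompactSpace.tendsto_subseq (fun k => T^[k * p] w)
  obtain ⟨N, hN⟩ := Metric.tendsto_atTop.mp hconv (δ' / 2) (by linarith)
  have hkl : φ N < φ (N + 1) := hφ (Nat.lt_succ_self N)
  set w₀ := T^[φ N * p] w with hw₀
  set q := (φ (N + 1) - φ N) * p with hq'
  have hq : 0 < q := Nat.mul_pos (Nat.sub_pos_of_lt hkl) hp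
  have hiter : T^[q] w₀ = T^[φ (N + 1) * p] w := by
    rw [hw₀, ← Function.iterate_add_apply]
    congr 1
    rw [hq', ← Nat.add_mul, Nat.sub_add_cancel hkl.le]
  have hret : dist (T^[q] w₀) w₀ < δ' := by
    rw [hiter, hw₀]
    calc dist (T^[φ (N+1) * p] w) (T^[φ N * p] w)
        ≤ dist (T^[φ (N+1) * p] w) c + dist (T^[φ N * p] w) c := dist_triangle_right _ _ _
      _ < δ' / 2 + δ' / 2 := add_lt_add (hN (N+1) (Nat.le_succ N)) (hN N le_rfl)
      _ = δ' := by ring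
  obtain ⟨y, hy⟩ := H (fun t => T^[t % q] w₀) (periodic_pseudo hq hret)
  refine ⟨y, q, hq, dvd_mul_left p _, ?_, ?_⟩
  · intro t
    refine ⟨t % q + φ N * p, ?_, ?_⟩
    · rw [Nat.add_mul_mod_self_right, Nat.mod_mod_of_dvd t (dvd_mul_left p _)]
    · rw [Function.iterate_add_apply]
      exact hy t
  · intro a b hab
    have ha := hy a
    have hb := hy b
    rw [hab] at ha
    calc dist (T^[a] y) (T^[b] y)
        ≤ dist (T^[a] y) (T^[b % q] w₀) + dist (T^[b] y) (T^[b % q] w₀) :=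
          dist_triangle_right _ _ _
      _ < η + η := add_lt_add ha hb
      _ = 2 * η := by ring


lemma exists_chain (hsh : ShadowingProperty T) (z₀ : X) (n : ℕ) (hn : 0 < n)
    (η : ℕ → ℝ) (hη : ∀ m, 0 < η m) :
    ∃ (w : ℕ → X) (p : ℕ → ℕ), w 0 = z₀ ∧ p 0 = n ∧ (∀ m, 0 < p m) ∧
      (∀ m, p m ∣ p (m + 1)) ∧
      (∀ m t, ∃ s, s % p m = t % p m ∧
        dist (T^[t] (w (m + 1))) (T^[s] (w m)) < η (m + 1)) ∧
      (∀ m a b, a % p (m + 1) = b % p (m + 1) →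
        dist (T^[a] (w (m + 1))) (T^[b] (w (m + 1))) < 2 * η (m + 1)) := by
  have step : ∀ (m : ℕ) (wp : X × ℕ), ∃ wp' : X × ℕ, 0 < wp.2 →
      (0 < wp'.2 ∧ wp.2 ∣ wp'.2 ∧
        (∀ t, ∃ s, s % wp.2 = t % wp.2 ∧ dist (T^[t] wp'.1) (T^[s] wp.1) < η (m + 1)) ∧
        (∀ a b, a % wp'.2 = b % wp'.2 →
          dist (T^[a] wp'.1) (T^[b] wp'.1) < 2 * η (m + 1))) := by
    intro m wp
    by_cases h : 0 < wp.2
    · obtain ⟨w', p', h1, h2, h3, h4⟩ := step_lemma hsh wp.1 wp.2 h (η (m + 1)) (hη (m + 1))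
      exact ⟨(w', p'), fun _ => ⟨h1, h2, h3, h4⟩⟩
    · exact ⟨wp, fun h' => absurd h' h⟩
  let F : ℕ → X × ℕ := fun m =>
    Nat.rec (motive := fun _ => X × ℕ) (z₀, n) (fun m ih => Classical.choose (step m ih)) m
  have hF : ∀ m, F (m + 1) = Classical.choose (step m (F m)) := fun m => rfl
  have pos : ∀ m, 0 < (F m).2 := by
    intro m
    induction m with
    | zero => exact hn
    | succ m ih => rw [hF m]; exact (Classical.choose_spec (step m (F m)) ih).1
  have spec : ∀ m, (F m).2 ∣ (F (m + 1)).2 ∧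
      (∀ t, ∃ s, s % (F m).2 = t % (F m).2 ∧
        dist (T^[t] (F (m + 1)).1) (T^[s] (F m).1) < η (m + 1)) ∧
      (∀ a b, a % (F (m + 1)).2 = b % (F (m + 1)).2 →
        dist (T^[a] (F (m + 1)).1) (T^[b] (F (m + 1)).1) < 2 * η (m + 1)) := by
    intro m
    have := Classical.choose_spec (step m (F m)) (pos m)
    rw [hF m]
    exact ⟨this.2.1, this.2.2.1, this.2.2.2⟩
  exact ⟨fun m => (F m).1, fun m => (F m).2, rfl, rfl, pos, fun m => (spec m).1,
    fun m => (spec m).2.1, fun m => (spec m).2.2⟩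


lemma limit_point (hT : Continuous T) {ε : ℝ} (hε : 0 < ε) (x z₀ : X) (n : ℕ)
    (w : ℕ → X) (p : ℕ → ℕ)
    (hw0 : w 0 = z₀) (hp0 : p 0 = n)
    (hpdvd : ∀ m, p m ∣ p (m + 1))
    (hchain : ∀ m t, ∃ s, s % p m = t % p m ∧
      dist (T^[t] (w (m + 1))) (T^[s] (w m)) < ε / 4 ^ (m + 2))
    (hC : ∀ m a b, a % p (m + 1) = b % p (m + 1) →
      dist (T^[a] (w (m + 1))) (T^[b] (w (m + 1))) < 2 * (ε / 4 ^ (m + 2)))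
    (hbase : ∀ t, dist (T^[t] z₀) (T^[t % n] x) < ε / 4) :
    ∃ z : X, (∀ m a b, a % p (m + 1) = b % p (m + 1) →
        dist (T^[a] z) (T^[b] z) ≤ ε / 4 ^ (m + 1)) ∧
      (∀ t, dist (T^[t] z) (T^[t % n] x) ≤ ε / 3) := by
  set σ : ℕ → ℝ := fun m => ε / (3 * 4 ^ (m + 1)) with hσ
  have hσpos : ∀ m, 0 < σ m := fun m => by rw [hσ]; positivity
  have hσstep : ∀ M, σ M = ε / 4 ^ (M + 2) + σ (M + 1) := by
    intro M
    rw [hσ]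
    have h4 : (0:ℝ) < (4:ℝ) ^ (M + 1) := by positivity
    have e1 : (4:ℝ) ^ (M + 2) = 4 ^ (M + 1) * 4 := by rw [pow_succ]
    rw [e1]
    field_simp
    ring
  -- divisibility between arbitrary levels
  have hdvdle : ∀ m M, m ≤ M → p m ∣ p M := by
    intro m M hmM
    induction M, hmM using Nat.le_induction with
    | base => exact dvd_rfl
    | succ M hmM ih => exact ih.trans (hpdvd M)
  -- chain composition
  have R : ∀ m M, m ≤ M → ∀ t, ∃ s, s % p m = t % p m ∧
      dist (T^[t] (w M)) (T^[s] (w m)) ≤ σ m - σ M := by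
    intro m M hmM
    induction M, hmM using Nat.le_induction with
    | base => intro t; exact ⟨t, rfl, by simp⟩
    | succ M hmM ih =>
      intro t
      obtain ⟨s₁, hs₁, hd₁⟩ := hchain M t
      obtain ⟨s, hs, hd⟩ := ih s₁
      refine ⟨s, ?_, ?_⟩
      · rw [hs]
        exact (Nat.ModEq.of_dvd (hdvdle m M hmM) (hs₁ : s₁ ≡ t [MOD p M]))
      · calc dist (T^[t] (w (M + 1))) (T^[s] (w m))
            ≤ dist (T^[t] (w (M + 1))) (T^[s₁] (w M)) + dist (T^[s₁] (w M)) (T^[s] (w m)) :=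
              dist_triangle _ _ _
          _ ≤ ε / 4 ^ (M + 2) + (σ m - σ M) := add_le_add hd₁.le hd
          _ = σ m - σ (M + 1) := by rw [hσstep M]; ring
  -- uniform bound at every level M ≥ m+1
  have U : ∀ m M, m + 1 ≤ M → ∀ a b, a % p (m + 1) = b % p (m + 1) →
      dist (T^[a] (w M)) (T^[b] (w M)) ≤ 2 * (ε / 4 ^ (m + 2)) + 2 * σ (m + 1) := by
    intro m M hmM a b hab
    obtain ⟨sa, hsa, hda⟩ := R (m + 1) M hmM a
    obtain ⟨sb, hsb, hdb⟩ := R (m + 1) M hmM b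
    have hmid : dist (T^[sa] (w (m + 1))) (T^[sb] (w (m + 1))) < 2 * (ε / 4 ^ (m + 2)) :=
      hC m sa sb (by rw [hsa, hab, ← hsb])
    have hσM := hσpos M
    calc dist (T^[a] (w M)) (T^[b] (w M))
        ≤ dist (T^[a] (w M)) (T^[sa] (w (m + 1))) +
            dist (T^[sa] (w (m + 1))) (T^[sb] (w (m + 1))) +
            dist (T^[sb] (w (m + 1))) (T^[b] (w M)) := dist_triangle4 _ _ _ _
      _ ≤ (σ (m + 1) - σ M) + 2 * (ε / 4 ^ (m + 2)) + (σ (m + 1) - σ M) := by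
          rw [dist_comm (T^[sb] (w (m + 1)))]
          exact add_le_add (add_le_add hda hmid.le) hdb
      _ ≤ 2 * (ε / 4 ^ (m + 2)) + 2 * σ (m + 1) := by linarith
  -- trace bound at every level
  have Tr : ∀ M t, dist (T^[t] (w M)) (T^[t % n] x) ≤ σ 0 + ε / 4 := by
    intro M t
    obtain ⟨s, hs, hd⟩ := R 0 M (Nat.zero_le M) t
    rw [hp0] at hs
    have hb := hbase s
    rw [hs] at hb
    have hσM := hσpos M
    calc dist (T^[t] (w M)) (T^[t % n] x)
        ≤ dist (T^[t] (w M)) (T^[s] (w 0)) + dist (T^[s] (w 0)) (T^[t % n] x) :=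
          dist_triangle _ _ _
      _ ≤ (σ 0 - σ M) + ε / 4 := by
          rw [← hw0] at hb
          exact add_le_add hd hb.le
      _ ≤ σ 0 + ε / 4 := by linarith
  -- extract a limit point
  obtain ⟨z, ψ, hψ, hconv⟩ := CompactSpace.tendsto_subseq w
  refine ⟨z, ?_, ?_⟩
  · intro m a b hab
    have htend : Tendsto (fun i => dist (T^[a] (w (ψ i))) (T^[b] (w (ψ i)))) atTop
        (nhds (dist (T^[a] z) (T^[b] z))) :=
      (((hT.iterate a).tendsto z).comp hconv).dist (((hT.iterate b).tendsto z).comp hconv)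
    refine le_of_tendsto htend ?_
    filter_upwards [eventually_ge_atTop (m + 1)] with i hi
    have hbd := U m (ψ i) (hi.trans hψ.le_apply) a b hab
    have harith : 2 * (ε / 4 ^ (m + 2)) + 2 * σ (m + 1) ≤ ε / 4 ^ (m + 1) := by
      have hA : (0:ℝ) < (4:ℝ) ^ (m + 1) := by positivity
      have hpow : (4:ℝ) ^ (m + 2) = 4 ^ (m + 1) * 4 := by rw [pow_succ]
      have hσm : σ (m + 1) = ε / (3 * (4 ^ (m + 1) * 4)) := by
        simp only [hσ]
        rw [show m + 1 + 1 = m + 2 from rfl, hpow]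
      rw [hpow, hσm]
      have heq : 2 * (ε / (4 ^ (m + 1) * 4)) + 2 * (ε / (3 * (4 ^ (m + 1) * 4)))
          = (2 / 3) * (ε / 4 ^ (m + 1)) := by
        field_simp
        ring
      rw [heq]
      have : 0 ≤ ε / 4 ^ (m + 1) := div_nonneg hε.le hA.le
      linarith
    linarith
  · intro t
    have htend : Tendsto (fun i => dist (T^[t] (w (ψ i))) (T^[t % n] x)) atTop
        (nhds (dist (T^[t] z) (T^[t % n] x))) :=
      (((hT.iterate t).tendsto z).comp hconv).dist tendsto_const_nhds
    refine le_of_tendsto htend ?_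
    filter_upwards with i
    have h1 : σ 0 + ε / 4 ≤ ε / 3 := by
      have : σ 0 = ε / 12 := by simp only [hσ]; norm_num
      rw [this]
      linarith
    linarith [Tr (ψ i) t]


lemma key_equicont (hT : Continuous T) {ε : ℝ} (hε : 0 < ε) (z : X) (p : ℕ → ℕ)
    (hppos : ∀ m, 0 < p m)
    (star : ∀ m a b, a % p (m + 1) = b % p (m + 1) →
      dist (T^[a] z) (T^[b] z) ≤ ε / 4 ^ (m + 1)) :
    ∀ ε' > (0:ℝ), ∃ δ'' > (0:ℝ), ∀ u v : X,
      u ∈ closure (Set.range fun a => T^[a] z) →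
      v ∈ closure (Set.range fun a => T^[a] z) →
      dist u v < δ'' → ∀ j, dist (T^[j] u) (T^[j] v) < ε' := by
  intro ε' hε'
  -- find a level m with ε / 4 ^ (m+1) < ε'/3
  obtain ⟨m, hm⟩ : ∃ m : ℕ, ε / 4 ^ (m + 1) < ε' / 3 := by
    obtain ⟨m₀, hm₀⟩ := exists_pow_lt_of_lt_one (x := ε' / 3 / ε) (y := (1:ℝ)/4)
      (by positivity) (by norm_num)
    refine ⟨m₀, ?_⟩
    have h1 : ε / 4 ^ (m₀ + 1) ≤ ε * (1 / 4 : ℝ) ^ m₀ := by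
      rw [div_eq_mul_inv]
      refine mul_le_mul_of_nonneg_left ?_ hε.le
      rw [← one_div]
      rw [one_div_pow]
      exact one_div_le_one_div_of_le (by positivity) (pow_le_pow_right₀ (by norm_num) (Nat.le_succ m₀))
    have h2 : ε * (1 / 4 : ℝ) ^ m₀ < ε' / 3 := by
      have := (mul_lt_mul_iff_right₀ hε).2 hm₀
      rwa [mul_div_cancel₀ _ (ne_of_gt hε)] at this
    linarith
  set k := p (m + 1) with hk
  have hkpos : 0 < k := hppos (m + 1)
  set S : ℕ → Set X := fun r => {u | ∃ a, a % k = r % k ∧ T^[a] z = u} with hS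
  set C : ℕ → Set X := fun r => closure (S r) with hC
  have Cmem : ∀ a, T^[a] z ∈ C (a % k) := by
    intro a
    exact subset_closure ⟨a, (Nat.mod_mod_of_dvd a dvd_rfl).symm, rfl⟩
  have Cclosed : ∀ r, IsClosed (C r) := fun r => isClosed_closure
  have Ccompact : ∀ r, IsCompact (C r) := fun r => (Cclosed r).isCompact
  have Cdiam : ∀ r, ∀ u ∈ C r, ∀ v ∈ C r, dist u v ≤ ε / 4 ^ (m + 1) := by
    intro r u hu v hv
    have hb : ∀ u' ∈ S r, ∀ v' ∈ S r, dist u' v' ≤ ε / 4 ^ (m + 1) := by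
      rintro _ ⟨a, ha, rfl⟩ _ ⟨b, hb, rfl⟩
      exact star m a b (ha.trans hb.symm)
    have hdiam : Metric.diam (S r) ≤ ε / 4 ^ (m + 1) :=
      Metric.diam_le_of_forall_dist_le (by positivity) hb
    calc dist u v ≤ Metric.diam (C r) :=
          Metric.dist_le_diam_of_mem (Ccompact r).isBounded hu hv
      _ = Metric.diam (S r) := Metric.diam_closure _
      _ ≤ ε / 4 ^ (m + 1) := hdiam
  have Cstep : ∀ r, ∀ u ∈ C r, T u ∈ C (r + 1) := by
    intro r u hu
    have h1 : T '' S r ⊆ S (r + 1) := by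
      rintro _ ⟨_, ⟨a, ha, rfl⟩, rfl⟩
      exact ⟨a + 1, by
        have : a % k = r % k := ha
        calc (a + 1) % k = (a % k + 1) % k := (Nat.mod_add_mod a k 1).symm
          _ = (r % k + 1) % k := by rw [this]
          _ = (r + 1) % k := Nat.mod_add_mod r k 1, Function.iterate_succ_apply' T a z⟩
    have h2 : T u ∈ T '' closure (S r) := ⟨u, hu, rfl⟩
    exact closure_mono h1 (image_closure_subset_closure_image hT h2)
  have Citer : ∀ j r, ∀ u ∈ C r, T^[j] u ∈ C (r + j) := by
    intro j
    induction j with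
    | zero => intro r u hu; simpa using hu
    | succ j ih =>
      intro r u hu
      rw [Function.iterate_succ_apply']
      have := Cstep (r + j) (T^[j] u) (ih r u hu)
      simpa [Nat.add_assoc] using this
  have Ccover : ∀ u ∈ closure (Set.range fun a => T^[a] z), ∃ r < k, u ∈ C r := by
    intro u hu
    have hW : closure (Set.range fun a => T^[a] z) ⊆ ⋃ r ∈ Finset.range k, C r := by
      refine closure_minimal ?_ ?_
      · rintro _ ⟨a, rfl⟩
        exact Set.mem_biUnion (Finset.mem_range.2 (Nat.mod_lt a hkpos)) (Cmem a)
      · exact (Finset.range k).finite_toSet.isClosed_biUnion fun r _ => Cclosed r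
    obtain ⟨r, hr, hur⟩ := Set.mem_iUnion₂.1 (hW hu)
    exact ⟨r, Finset.mem_range.1 hr, hur⟩
  -- separation constant for disjoint pieces
  set P : Set (ℕ × ℕ) := {rs | rs.1 < k ∧ rs.2 < k ∧ C rs.1 ∩ C rs.2 = ∅} with hP
  have hPfin : P.Finite :=
    Set.Finite.subset ((Set.finite_Iio k).prod (Set.finite_Iio k))
      (fun rs hrs => ⟨hrs.1, hrs.2.1⟩)
  set B : Set (X × X) := ⋃ rs ∈ P, C rs.1 ×ˢ C rs.2 with hB
  have hBcompact : IsCompact B :=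
    hPfin.isCompact_biUnion fun rs _ => (Ccompact rs.1).prod (Ccompact rs.2)
  obtain ⟨d₀, hd₀pos, hd₀⟩ : ∃ d₀ > (0:ℝ), ∀ q ∈ B, d₀ ≤ dist (Prod.fst q) q.2 := by
    rcases Set.eq_empty_or_nonempty B with hBe | hBne
    · exact ⟨1, one_pos, fun q hq => absurd (hBe ▸ hq) (Set.notMem_empty q)⟩
    · obtain ⟨q₀, hq₀B, hq₀min⟩ := hBcompact.exists_isMinOn hBne
        (continuous_dist.continuousOn (s := B))
      refine ⟨dist q₀.1 q₀.2, ?_, fun q hq => hq₀min hq⟩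
      obtain ⟨rs, hrs, hq₀⟩ := Set.mem_iUnion₂.1 hq₀B
      have hne : q₀.1 ≠ q₀.2 := by
        intro hcon
        have : q₀.1 ∈ C rs.1 ∩ C rs.2 := ⟨hq₀.1, hcon ▸ hq₀.2⟩
        rw [hrs.2.2] at this
        exact this
      exact dist_pos.2 hne
  refine ⟨min (ε' / 3) d₀, lt_min (by linarith) hd₀pos, ?_⟩
  intro u v hu hv huv j
  obtain ⟨r, hr, hur⟩ := Ccover u hu
  obtain ⟨s, hs, hvs⟩ := Ccover v hv
  have hint : (C r ∩ C s).Nonempty := by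
    rw [Set.nonempty_iff_ne_empty]
    intro hcon
    have hmem : (u, v) ∈ B :=
      Set.mem_biUnion (show ((r, s) : ℕ × ℕ) ∈ P from ⟨hr, hs, hcon⟩)
        (Set.mk_mem_prod hur hvs)
    have := hd₀ (u, v) hmem
    simp only at this
    have : d₀ ≤ dist u v := this
    have h2 : dist u v < d₀ := lt_of_lt_of_le huv (min_le_right _ _)
    linarith
  obtain ⟨q₀, hq₀r, hq₀s⟩ := hint
  have h1 : dist (T^[j] u) (T^[j] q₀) ≤ ε / 4 ^ (m + 1) :=
    Cdiam (r + j) _ (Citer j r u hur) _ (Citer j r q₀ hq₀r)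
  have h2 : dist (T^[j] q₀) (T^[j] v) ≤ ε / 4 ^ (m + 1) :=
    Cdiam (s + j) _ (Citer j s q₀ hq₀s) _ (Citer j s v hvs)
  calc dist (T^[j] u) (T^[j] v)
      ≤ dist (T^[j] u) (T^[j] q₀) + dist (T^[j] q₀) (T^[j] v) := dist_triangle _ _ _
    _ ≤ ε / 4 ^ (m + 1) + ε / 4 ^ (m + 1) := add_le_add h1 h2
    _ < ε' / 3 + ε' / 3 := add_lt_add hm hm
    _ < ε' := by linarith


end Aux

theorem stmt6 {X : Type*} [MetricSpace X] [CompactSpace X]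
    (T : X → X) (hT : Continuous T) (hsh : ShadowingProperty T)
    (ε δ : ℝ) (hε : 0 < ε) (hδpos : 0 < δ)
    (hδ : ∀ x : ℕ → X, (∀ k, dist (T (x k)) (x (k + 1)) < δ) →
      ∃ y : X, ∀ k, dist (T^[k] y) (x k) < ε / 4)
    (x : X) (n : ℕ) (hn : 0 < n) (hx : dist (T^[n] x) x < δ) :
    ∃ z : X, RegularlyRecurrent T z ∧
      (∃ h : Set.MapsTo T (orbitClosure T z) (orbitClosure T z),
        IsOdometer (Set.MapsTo.restrict T _ _ h)) ∧
      ∀ j : ℕ, ∀ i < n, dist (T^[j * n + i] z) (T^[i] x) ≤ ε := by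
  obtain ⟨z₀, hz₀⟩ := hδ (fun t => T^[t % n] x) (periodic_pseudo hn hx)
  obtain ⟨w, p, hw0, hp0, hppos, hpdvd, hchain, hCprop⟩ :=
    exists_chain hsh z₀ n hn (fun m => ε / 4 ^ (m + 1)) (fun m => by positivity)
  obtain ⟨z, star, trace⟩ :=
    limit_point hT hε x z₀ n w p hw0 hp0 hpdvd
      (fun m t => hchain m t) (fun m a b hab => hCprop m a b hab) hz₀
  have hreg : RegularlyRecurrent T z := by
    intro U hU
    obtain ⟨r, hr, hball⟩ := Metric.mem_nhds_iff.1 hU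
    obtain ⟨m, hm⟩ := small_level hε r hr
    refine ⟨p (m + 1), hppos (m + 1), fun c => hball ?_⟩
    have hmod : (p (m + 1) * c) % p (m + 1) = 0 % p (m + 1) := by
      simp [Nat.mul_mod_right]
    have hd := star m (p (m + 1) * c) 0 hmod
    rw [Function.iterate_zero_apply] at hd
    exact Metric.mem_ball.2 (lt_of_le_of_lt hd hm)
  have hmaps : Set.MapsTo T (orbitClosure T z) (orbitClosure T z) := by
    intro u hu
    have h1 : T '' (Set.range fun a => T^[a] z) ⊆ Set.range fun a => T^[a] z := by
      rintro _ ⟨_, ⟨a, rfl⟩, rfl⟩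
      exact ⟨a + 1, Function.iterate_succ_apply' T a z⟩
    exact closure_mono h1 (image_closure_subset_closure_image hT ⟨u, hu, rfl⟩)
  have hzmem : z ∈ orbitClosure T z := subset_closure ⟨0, rfl⟩
  have hequi : Equicontinuous fun k : ℕ => (Set.MapsTo.restrict T _ _ hmaps)^[k] := by
    intro x₀
    rw [Metric.equicontinuousAt_iff]
    intro ε' hε'
    obtain ⟨δ'', hδ''pos, hkey⟩ := key_equicont hT hε z p hppos star ε' hε'
    refine ⟨δ'', hδ''pos, fun u hu i => ?_⟩
    rw [Subtype.dist_eq, Set.MapsTo.coe_iterate_restrict, Set.MapsTo.coe_iterate_restrict]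
    exact hkey x₀.1 u.1 x₀.2 u.2 (by rwa [Subtype.dist_eq, dist_comm] at hu) i
  refine ⟨z, hreg, ⟨hmaps, hequi, ⟨z, hzmem⟩, ?_, ?_⟩, ?_⟩
  · intro U hU
    obtain ⟨r, hr, hball⟩ := Metric.mem_nhds_iff.1 hU
    obtain ⟨m, hm⟩ := small_level hε r hr
    refine ⟨p (m + 1), hppos (m + 1), fun c => hball ?_⟩
    rw [Metric.mem_ball, Subtype.dist_eq, Set.MapsTo.coe_iterate_restrict]
    have hmod : (p (m + 1) * c) % p (m + 1) = 0 % p (m + 1) := by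
      simp [Nat.mul_mod_right]
    have hd := star m (p (m + 1) * c) 0 hmod
    rw [Function.iterate_zero_apply] at hd
    exact lt_of_le_of_lt hd hm
  · intro u
    rw [closure_subtype]
    have himg : (Subtype.val '' Set.range fun c =>
        (Set.MapsTo.restrict T _ _ hmaps)^[c] ⟨z, hzmem⟩) = Set.range fun c => T^[c] z := by
      ext v
      constructor
      · rintro ⟨_, ⟨c, rfl⟩, rfl⟩
        exact ⟨c, (Set.MapsTo.coe_iterate_restrict hmaps ⟨z, hzmem⟩ c).symm⟩
      · rintro ⟨c, rfl⟩
        exact ⟨(Set.MapsTo.restrict T _ _ hmaps)^[c] ⟨z, hzmem⟩, ⟨c, rfl⟩,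
          Set.MapsTo.coe_iterate_restrict hmaps ⟨z, hzmem⟩ c⟩
    rw [himg]
    exact u.2
  · intro j i hi
    have ht := trace (j * n + i)
    rw [show (j * n + i) % n = i by
      rw [Nat.add_comm, Nat.add_mul_mod_self_right]; exact Nat.mod_eq_of_lt hi] at ht
    linarith
end

section
/- Let (X,T) be a dynamical system with the shadowing property. Then the set of points z ∈ X whose orbit closure is an odometer (equivalently, the set of regularly recurrent points z for which the orbit closure is equicontinuous) is dense in the non-wandering set Ω(X,T). -/
open Filter

/-- `x` is a non-wandering point of `(X,T)`. -/
def NonWandering {X : Type*} [TopologicalSpace X] (T : X → X) (x : X) : Prop :=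
  ∀ U ∈ nhds x, ∃ y ∈ U, ∃ k : ℕ, 0 < k ∧ T^[k] y ∈ U

open Topology Set Function

private lemma dc' {α : Type*} (P : ℕ → α → Prop) (R : ℕ → α → α → Prop)
    (a0 : α) (h0 : P 0 a0)
    (hstep : ∀ i a, P i a → ∃ b, P (i + 1) b ∧ R i a b) :
    ∃ u : ℕ → α, u 0 = a0 ∧ (∀ i, P i (u i)) ∧ ∀ i, R i (u i) (u (i + 1)) := by
  choose f hf1 hf2 using hstep
  let u : ∀ i : ℕ, { a : α // P i a } :=
    fun i => Nat.rec ⟨a0, h0⟩ (fun i p => ⟨f i p.1 p.2, hf1 i p.1 p.2⟩) i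
  exact ⟨fun i => (u i).1, rfl, fun i => (u i).2, fun i => hf2 i (u i).1 (u i).2⟩

private lemma ultra_limit' {X : Type*} [MetricSpace X] [CompactSpace X]
    (𝒰 : Ultrafilter ℕ) (v : ℕ → X) : ∃ a, Tendsto v (𝒰 : Filter ℕ) (𝓝 a) := by
  obtain ⟨a, -, ha⟩ := isCompact_univ.ultrafilter_le_nhds (𝒰.map v) (by simp)
  refine ⟨a, ?_⟩
  rwa [Ultrafilter.coe_map] at ha

private lemma ultra_residue' (𝒰 : Ultrafilter ℕ) (m : ℕ → ℕ) {M : ℕ} (hM : 0 < M) :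
    ∃ r, r < M ∧ ∀ᶠ k in (𝒰 : Filter ℕ), m k % M = r := by
  have hu : (⋃ r ∈ (↑(Finset.range M) : Set ℕ), {k | m k % M = r}) ∈ 𝒰 := by
    have : (⋃ r ∈ (↑(Finset.range M) : Set ℕ), {k | m k % M = r}) = univ := by
      ext k
      simp only [Set.mem_iUnion, Set.mem_setOf_eq, Finset.coe_range, Set.mem_Iio,
        Set.mem_univ, iff_true]
      exact ⟨m k % M, Nat.mod_lt _ hM, rfl⟩
    rw [this]
    exact univ_mem
  rcases (Ultrafilter.finite_biUnion_mem_iff (Finset.range M).finite_toSet).1 hu with ⟨r, hrM, hr⟩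
  refine ⟨r, by simpa using hrM, hr⟩

/-- In a system with shadowing, points whose orbit closure is an odometer are
dense in the non-wandering set. -/
theorem stmt7 {X : Type*} [MetricSpace X] [CompactSpace X]
    (T : X → X) (hT : Continuous T) (hsh : ShadowingProperty T)
    (x : X) (hx : NonWandering T x) :
    x ∈ closure {z : X |
      ∃ h : Set.MapsTo T (orbitClosure T z) (orbitClosure T z),
        IsOdometer (Set.MapsTo.restrict T _ _ h)} := by
  have hTn : ∀ n : ℕ, Continuous (T^[n]) := fun n => hT.iterate n
  rw [Metric.mem_closure_iff]
  intro ε hε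
  -- shadowing modulus
  obtain ⟨Df, hDf⟩ : ∃ Df : ℝ → ℝ, ∀ e : ℝ, 0 < e → (0 < Df e ∧ ∀ w : ℕ → X,
      (∀ k, dist (T (w k)) (w (k + 1)) < Df e) → ∃ y, ∀ k, dist (T^[k] y) (w k) < e) := by
    choose Df h1 h2 using hsh
    refine ⟨fun e => if he : 0 < e then Df e he else 1, fun e he => ?_⟩
    simp only [dif_pos he]
    exact ⟨h1 e he, h2 e he⟩
  -- scales
  obtain ⟨η, hηdef⟩ : ∃ η : ℕ → ℝ, η = fun i => ε / 2 ^ (i + 3) := ⟨_, rfl⟩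
  have hηpos : ∀ i, 0 < η i := by
    intro i; rw [hηdef]; positivity
  have hηhalf : ∀ i, η (i + 1) = η i / 2 := by
    intro i
    rw [hηdef]
    show ε / 2 ^ (i + 1 + 3) = ε / 2 ^ (i + 3) / 2
    rw [div_div, ← pow_succ]
  have hηsmall : ∀ ρ : ℝ, 0 < ρ → ∃ i, 4 * η i < ρ := by
    intro ρ hρ
    obtain ⟨n, hn⟩ := pow_unbounded_of_one_lt (R := ℝ) (4 * ε / ρ) one_lt_two
    have hp : (0 : ℝ) < 2 ^ (n + 3) := by positivity
    have h2n : (4 : ℝ) * ε / ρ < 2 ^ (n + 3) :=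
      lt_of_lt_of_le hn (pow_le_pow_right₀ one_le_two (by omega))
    rw [div_lt_iff₀ hρ] at h2n
    refine ⟨n, ?_⟩
    rw [hηdef]
    show 4 * (ε / 2 ^ (n + 3)) < ρ
    rw [mul_div_assoc'] at *
    rw [div_lt_iff₀ hp]
    nlinarith
  
  -- base stage
  have hbase : ∃ d0 : ℕ × X, (0 < d0.1 ∧ dist (T^[d0.1] d0.2) d0.2 < Df (η 0)) ∧
      dist d0.2 x < η 0 := by
    have hrpos : 0 < min (η 0) (Df (η 0) / 2) :=
      lt_min (hηpos 0) (half_pos (hDf (η 0) (hηpos 0)).1)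
    obtain ⟨y, hyU, k, hk, hky⟩ := hx (Metric.ball x (min (η 0) (Df (η 0) / 2)))
      (Metric.ball_mem_nhds x hrpos)
    rw [Metric.mem_ball] at hyU hky
    refine ⟨(k, y), ⟨hk, ?_⟩, lt_of_lt_of_le hyU (min_le_left _ _)⟩
    calc dist (T^[k] y) y ≤ dist (T^[k] y) x + dist x y := dist_triangle _ _ _
      _ < min (η 0) (Df (η 0) / 2) + min (η 0) (Df (η 0) / 2) := by
          rw [dist_comm x y]; exact add_lt_add hky hyU
      _ ≤ Df (η 0) / 2 + Df (η 0) / 2 := by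
          have := min_le_right (η 0) (Df (η 0) / 2); linarith
      _ = Df (η 0) := by ring
  -- inductive step
  have hstep : ∀ i (d : ℕ × X), (0 < d.1 ∧ dist (T^[d.1] d.2) d.2 < Df (η i)) →
      ∃ d' : ℕ × X, (0 < d'.1 ∧ dist (T^[d'.1] d'.2) d'.2 < Df (η (i + 1))) ∧
        (d.1 ∣ d'.1 ∧ ∀ s : ℕ, dist (T^[s] d'.2) (T^[s % d.1] d.2) ≤ η i) := by
    rintro i ⟨N, q⟩ ⟨hN, hjump⟩
    -- the periodic pseudo-orbit
    have hpseudo : ∀ s : ℕ, dist (T ((fun s => T^[s % N] q) s)) ((fun s => T^[s % N] q) (s + 1)) <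
        Df (η i) := by
      intro s
      simp only []
      have hmod : (s + 1) % N = (s % N + 1) % N :=
        Nat.ModEq.add_right 1 ((Nat.mod_modEq s N).symm)
      by_cases hcase : s % N + 1 = N
      · rw [hmod, hcase, Nat.mod_self]
        rw [← Function.iterate_succ_apply' T (s % N) q]
        rw [Nat.succ_eq_add_one, hcase]
        simpa using hjump
      · have hlt : s % N + 1 < N := lt_of_le_of_ne (Nat.mod_lt s hN) hcase
        rw [hmod, Nat.mod_eq_of_lt hlt, ← Function.iterate_succ_apply' T (s % N) q]
        simpa using (hDf (η i) (hηpos i)).1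
    obtain ⟨y, hy⟩ := (hDf (η i) (hηpos i)).2 _ hpseudo
    -- pigeonhole: two close points along the T^[N]-orbit of y
    have hfin : ∃ m m' : ℕ, m < m' ∧
        dist (T^[N * m'] y) (T^[N * m] y) < Df (η (i + 1)) := by
      have hd2 : 0 < Df (η (i + 1)) / 2 := half_pos (hDf (η (i + 1)) (hηpos (i + 1))).1
      obtain ⟨t, htfin, htcov⟩ :=
        (Metric.totallyBounded_iff.1 (isCompact_univ : IsCompact (Set.univ : Set X)).totallyBounded) _ hd2
      have hc : ∀ m : ℕ, ∃ c : X, c ∈ t ∧ T^[N * m] y ∈ Metric.ball c (Df (η (i + 1)) / 2) := by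
        intro m
        have := htcov (Set.mem_univ (T^[N * m] y))
        simpa using this
      choose c hct hcb using hc
      haveI : Finite ↥t := htfin.to_subtype
      obtain ⟨m, m', hne, heq⟩ :=
        Finite.exists_ne_map_eq_of_infinite (fun m : ℕ => (⟨c m, hct m⟩ : ↥t))
      have hceq : c m = c m' := congrArg Subtype.val heq
      have hdd : dist (T^[N * m'] y) (T^[N * m] y) < Df (η (i + 1)) := by
        simp only [Metric.mem_ball] at hcb
        calc dist (T^[N * m'] y) (T^[N * m] y)
            ≤ dist (T^[N * m'] y) (c m') + dist (T^[N * m] y) (c m') := dist_triangle_right _ _ _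
          _ < Df (η (i + 1)) / 2 + Df (η (i + 1)) / 2 := by
              rw [← hceq]; exact add_lt_add (hceq ▸ hcb m') (hcb m)
          _ = Df (η (i + 1)) := by ring
      rcases Nat.lt_or_gt_of_ne hne with hlt | hlt
      · exact ⟨m, m', hlt, hdd⟩
      · exact ⟨m', m, hlt, by rwa [dist_comm]⟩
    obtain ⟨m, m', hmm, hclose⟩ := hfin
    refine ⟨(N * (m' - m), T^[N * m] y), ⟨?_, ?_⟩, ⟨m' - m, rfl⟩, ?_⟩
    · exact Nat.mul_pos hN (by omega)
    · have harith : T^[N * (m' - m)] (T^[N * m] y) = T^[N * m'] y := by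
        rw [← Function.iterate_add_apply]
        congr 1
        have : N * (m' - m) + N * m = N * m' := by
          rw [← Nat.mul_add]
          congr 1
          omega
        exact this
      rw [harith]
      exact hclose
    · intro s
      have h1 : T^[s] (T^[N * m] y) = T^[s + N * m] y :=
        (Function.iterate_add_apply T s (N * m) y).symm
      have h2 : (s + N * m) % N = s % N := Nat.add_mul_mod_self_left s N m
      have h3 := hy (s + N * m)
      rw [h2] at h3
      rw [h1]
      exact h3.le
  obtain ⟨d0, hd0, hd0x⟩ := hbase
  obtain ⟨u, hu0, hPu, hRu⟩ := dc' _ _ d0 hd0 hstep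
  
  -- notation for the stages
  obtain ⟨N, hNdef⟩ : ∃ N : ℕ → ℕ, N = fun i => (u i).1 := ⟨_, rfl⟩
  obtain ⟨q, hqdef⟩ : ∃ q : ℕ → X, q = fun i => (u i).2 := ⟨_, rfl⟩
  obtain ⟨w, hwdef⟩ : ∃ w : ℕ → ℕ → X, w = fun i s => T^[s % N i] (q i) := ⟨_, rfl⟩
  have hNpos : ∀ i, 0 < N i := by intro i; rw [hNdef]; exact (hPu i).1
  have hdvd : ∀ i, N i ∣ N (i + 1) := by intro i; rw [hNdef]; exact (hRu i).1
  have htrack : ∀ i s, dist (T^[s] (q (i + 1))) (w i s) ≤ η i := by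
    intro i s
    simp only [hwdef, hqdef, hNdef]
    exact (hRu i).2 s
  have hwcongr : ∀ i s s', s ≡ s' [MOD N i] → w i s = w i s' := by
    intro i s s' h
    rw [hwdef]
    show T^[s % N i] (q i) = T^[s' % N i] (q i)
    rw [h]
  have hwsucc : ∀ i s, dist (w (i + 1) s) (w i s) ≤ η i := by
    intro i s
    have h1 := htrack i (s % N (i + 1))
    have h2 : w i (s % N (i + 1)) = w i s :=
      hwcongr i _ s (Nat.mod_mod_of_dvd s (hdvd i))
    rw [h2] at h1
    have h3 : w (i + 1) s = T^[s % N (i + 1)] (q (i + 1)) := by rw [hwdef]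
    rw [h3]
    exact h1
  have htel : ∀ i j, i ≤ j → ∀ s, dist (w j s) (w i s) ≤ 2 * η i - 2 * η j := by
    intro i j hij
    induction j, hij using Nat.le_induction with
    | base => intro s; simp
    | succ j hij ih =>
      intro s
      calc dist (w (j + 1) s) (w i s)
          ≤ dist (w (j + 1) s) (w j s) + dist (w j s) (w i s) := dist_triangle _ _ _
        _ ≤ η j + (2 * η i - 2 * η j) := add_le_add (hwsucc j s) (ih s)
        _ = 2 * η i - 2 * η (j + 1) := by rw [hηhalf j]; ring
  -- the limit point z
  have h𝒱le : ((Ultrafilter.of (atTop : Filter ℕ)) : Filter ℕ) ≤ atTop := Ultrafilter.of_le _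
  obtain ⟨z, hz⟩ := ultra_limit' (Ultrafilter.of atTop) (fun j => q (j + 1))
  have hZ : ∀ i s, dist (T^[s] z) (w i s) ≤ 2 * η i := by
    intro i s
    have hlim : Tendsto (fun j => T^[s] (q (j + 1)))
        ((Ultrafilter.of (atTop : Filter ℕ)) : Filter ℕ) (𝓝 (T^[s] z)) :=
      ((hTn s).tendsto z).comp hz
    refine le_of_tendsto (hlim.dist tendsto_const_nhds) ?_
    refine Filter.Eventually.filter_mono h𝒱le (Filter.eventually_atTop.2 ⟨i, fun j hj => ?_⟩)
    calc dist (T^[s] (q (j + 1))) (w i s)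
        ≤ dist (T^[s] (q (j + 1))) (w j s) + dist (w j s) (w i s) := dist_triangle _ _ _
      _ ≤ η j + (2 * η i - 2 * η j) := add_le_add (htrack j s) (htel i j hj s)
      _ ≤ 2 * η i := by have := hηpos j; linarith
  -- z is close to x
  have hw00 : w 0 0 = q 0 := by
    rw [hwdef]
    show T^[0 % N 0] (q 0) = q 0
    simp
  have hq0x : dist (q 0) x < η 0 := by
    rw [hqdef]
    show dist (u 0).2 x < η 0
    rw [hu0]
    exact hd0x
  have hxz : dist x z < ε := by
    have h1 : dist z (w 0 0) ≤ 2 * η 0 := by simpa using hZ 0 0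
    have h0 : η 0 = ε / 8 := by rw [hηdef]; norm_num
    calc dist x z ≤ dist x (q 0) + dist (q 0) z := dist_triangle _ _ _
      _ ≤ η 0 + 2 * η 0 := by
          rw [dist_comm x (q 0), dist_comm (q 0) z]
          exact add_le_add hq0x.le (hw00 ▸ h1)
      _ < ε := by rw [h0] at *; linarith
  -- z is regularly recurrent
  have hRRret : ∀ i m, dist (T^[N i * m] z) z ≤ 4 * η i := by
    intro i m
    have h1 : dist (T^[N i * m] z) (w i (N i * m)) ≤ 2 * η i := hZ i (N i * m)
    have h2 : w i (N i * m) = w i 0 := by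
      apply hwcongr
      show (N i * m) % N i = 0 % N i
      simp [Nat.mul_mod_right]
    have h3 : dist z (w i 0) ≤ 2 * η i := by simpa using hZ i 0
    rw [h2] at h1
    calc dist (T^[N i * m] z) z ≤ dist (T^[N i * m] z) (w i 0) + dist (w i 0) z :=
        dist_triangle _ _ _
      _ ≤ 2 * η i + 2 * η i := add_le_add h1 (dist_comm z (w i 0) ▸ h3)
      _ = 4 * η i := by ring
  have hRRzX : RegularlyRecurrent T z := by
    intro U hU
    obtain ⟨ρ, hρ, hball⟩ := Metric.mem_nhds_iff.1 hU
    obtain ⟨i, hi⟩ := hηsmall ρ hρ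
    refine ⟨N i, hNpos i, fun m => hball ?_⟩
    rw [Metric.mem_ball]
    exact lt_of_le_of_lt (hRRret i m) hi
  
  -- phase machinery
  have hPH' : ∀ (g : ℕ → X) (c : X) (r : ℕ → ℕ),
      Tendsto g ((Ultrafilter.of (atTop : Filter ℕ)) : Filter ℕ) (𝓝 c) →
      (∀ i, ∀ᶠ k in ((Ultrafilter.of (atTop : Filter ℕ)) : Filter ℕ),
        ∀ u, dist (T^[u] (g k)) (w i (r i + u)) ≤ 2 * η i) →
      ∀ i u, dist (T^[u] c) (w i (r i + u)) ≤ 2 * η i := by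
    intro g c r hg hev i u
    have hlim : Tendsto (fun k => T^[u] (g k))
        ((Ultrafilter.of (atTop : Filter ℕ)) : Filter ℕ) (𝓝 (T^[u] c)) :=
      ((hTn u).tendsto c).comp hg
    refine le_of_tendsto (hlim.dist tendsto_const_nhds) ?_
    filter_upwards [hev i] with k hk
    exact hk u
  have hsing : ∀ (r : ℕ → ℕ) (c c' : X),
      (∀ i u, dist (T^[u] c) (w i (r i + u)) ≤ 2 * η i) →
      (∀ i u, dist (T^[u] c') (w i (r i + u)) ≤ 2 * η i) → c = c' := by
    intro r c c' hc hc'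
    have hdist : ∀ i, dist c c' ≤ 4 * η i := by
      intro i
      have h1 : dist c (w i (r i + 0)) ≤ 2 * η i := by simpa using hc i 0
      have h2 : dist c' (w i (r i + 0)) ≤ 2 * η i := by simpa using hc' i 0
      calc dist c c' ≤ dist c (w i (r i + 0)) + dist c' (w i (r i + 0)) :=
          dist_triangle_right _ _ _
        _ ≤ 4 * η i := by linarith
    by_contra hne
    have hpos : 0 < dist c c' := dist_pos.2 fun hcc => hne hcc
    obtain ⟨i, hi⟩ := hηsmall (dist c c') hpos
    exact absurd (hdist i) (not_le.2 hi)
  have hOrbPhase : ∀ (v : ℕ → ℕ) (r : ℕ → ℕ),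
      (∀ i, ∀ᶠ k in ((Ultrafilter.of (atTop : Filter ℕ)) : Filter ℕ), v k ≡ r i [MOD N i]) →
      ∀ i, ∀ᶠ k in ((Ultrafilter.of (atTop : Filter ℕ)) : Filter ℕ),
        ∀ u, dist (T^[u] (T^[v k] z)) (w i (r i + u)) ≤ 2 * η i := by
    intro v r hv i
    filter_upwards [hv i] with k hk
    intro u
    have h1 : T^[u] (T^[v k] z) = T^[u + v k] z := (Function.iterate_add_apply T u (v k) z).symm
    have h2 : w i (u + v k) = w i (r i + u) := by
      apply hwcongr
      have := Nat.ModEq.add_left u hk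
      rwa [Nat.add_comm u (r i)] at this
    rw [h1, ← h2]
    exact hZ i (u + v k)
  -- uniform equicontinuity along the orbit of z
  have hEQ : ∀ e : ℝ, 0 < e → ∃ θ : ℝ, 0 < θ ∧ ∀ s t : ℕ, dist (T^[s] z) (T^[t] z) < θ →
      ∀ n : ℕ, dist (T^[s + n] z) (T^[t + n] z) ≤ e := by
    intro e he
    by_contra hcon
    push_neg at hcon
    have hsel : ∀ k : ℕ, ∃ s t n : ℕ, dist (T^[s] z) (T^[t] z) < 1 / ((k : ℝ) + 1) ∧
        e < dist (T^[s + n] z) (T^[t + n] z) := by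
      intro k
      obtain ⟨s, t, hst, n, hn⟩ := hcon (1 / ((k : ℝ) + 1)) (by positivity)
      exact ⟨s, t, n, hst, hn⟩
    choose sf tf nf h1 h2 using hsel
    obtain ⟨a, ha⟩ := ultra_limit' (Ultrafilter.of atTop) (fun k => T^[sf k] z)
    obtain ⟨b, hb⟩ := ultra_limit' (Ultrafilter.of atTop) (fun k => T^[tf k] z)
    obtain ⟨A, hA⟩ := ultra_limit' (Ultrafilter.of atTop) (fun k => T^[sf k + nf k] z)
    obtain ⟨B, hB⟩ := ultra_limit' (Ultrafilter.of atTop) (fun k => T^[tf k + nf k] z)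
    obtain ⟨D, hD⟩ := ultra_limit' (Ultrafilter.of atTop) (fun k => T^[nf k] a)
    -- a = b
    have hab : a = b := by
      have hd : ∀ j : ℕ, dist a b ≤ 1 / ((j : ℝ) + 1) := by
        intro j
        refine le_of_tendsto (ha.dist hb) ?_
        refine Filter.Eventually.filter_mono h𝒱le (Filter.eventually_atTop.2 ⟨j, fun k hk => ?_⟩)
        refine le_trans (h1 k).le ?_
        apply one_div_le_one_div_of_le (by positivity)
        have : (j : ℝ) ≤ (k : ℝ) := Nat.cast_le.2 hk
        linarith
      have hle : dist a b ≤ 0 := by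
        by_contra hpos
        push_neg at hpos
        obtain ⟨j, hj⟩ := exists_nat_one_div_lt hpos
        exact absurd (hd j) (not_le.2 hj)
      exact dist_le_zero.1 hle
    -- residues
    choose πs hπslt hπs using fun i => ultra_residue' (Ultrafilter.of atTop) sf (hNpos i)
    choose πt hπtlt hπt using fun i => ultra_residue' (Ultrafilter.of atTop) tf (hNpos i)
    choose πn hπnlt hπn using fun i => ultra_residue' (Ultrafilter.of atTop) nf (hNpos i)
    have hmod : ∀ (v : ℕ → ℕ) (r : ℕ → ℕ), (∀ i, r i < N i) →
        (∀ i, ∀ᶠ k in ((Ultrafilter.of (atTop : Filter ℕ)) : Filter ℕ), v k % N i = r i) →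
        ∀ i, ∀ᶠ k in ((Ultrafilter.of (atTop : Filter ℕ)) : Filter ℕ), v k ≡ r i [MOD N i] := by
      intro v r hrlt hr i
      filter_upwards [hr i] with k hk
      show v k % N i = r i % N i
      rw [hk, Nat.mod_eq_of_lt (hrlt i)]
    -- phases of the four limit points
    have hPa : ∀ i u, dist (T^[u] a) (w i (πs i + u)) ≤ 2 * η i :=
      hPH' _ a πs ha (hOrbPhase sf πs (hmod sf πs hπslt hπs))
    have hPb : ∀ i u, dist (T^[u] b) (w i (πt i + u)) ≤ 2 * η i :=
      hPH' _ b πt hb (hOrbPhase tf πt (hmod tf πt hπtlt hπt))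
    have hPA : ∀ i u, dist (T^[u] A) (w i ((πs i + πn i) + u)) ≤ 2 * η i := by
      refine hPH' _ A (fun i => πs i + πn i) hA (hOrbPhase _ _ ?_)
      intro i
      filter_upwards [hπs i, hπn i] with k hks hkn
      have h1 : sf k ≡ πs i [MOD N i] := by
        show sf k % N i = πs i % N i
        rw [hks, Nat.mod_eq_of_lt (hπslt i)]
      have h2 : nf k ≡ πn i [MOD N i] := by
        show nf k % N i = πn i % N i
        rw [hkn, Nat.mod_eq_of_lt (hπnlt i)]
      exact Nat.ModEq.add h1 h2
    have hPB : ∀ i u, dist (T^[u] B) (w i ((πt i + πn i) + u)) ≤ 2 * η i := by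
      refine hPH' _ B (fun i => πt i + πn i) hB (hOrbPhase _ _ ?_)
      intro i
      filter_upwards [hπt i, hπn i] with k hkt hkn
      have h1 : tf k ≡ πt i [MOD N i] := by
        show tf k % N i = πt i % N i
        rw [hkt, Nat.mod_eq_of_lt (hπtlt i)]
      have h2 : nf k ≡ πn i [MOD N i] := by
        show nf k % N i = πn i % N i
        rw [hkn, Nat.mod_eq_of_lt (hπnlt i)]
      exact Nat.ModEq.add h1 h2
    -- the phase of D, computed twice (using a = b)
    have hPDgen : ∀ (c : X) (r : ℕ → ℕ),
        (∀ i u, dist (T^[u] c) (w i (r i + u)) ≤ 2 * η i) →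
        Tendsto (fun k => T^[nf k] c) ((Ultrafilter.of (atTop : Filter ℕ)) : Filter ℕ) (𝓝 D) →
        ∀ i u, dist (T^[u] D) (w i ((r i + πn i) + u)) ≤ 2 * η i := by
      intro c r hc hlim
      refine hPH' _ D (fun i => r i + πn i) hlim ?_
      intro i
      filter_upwards [hπn i] with k hk
      intro u
      have h1 : T^[u] (T^[nf k] c) = T^[u + nf k] c :=
        (Function.iterate_add_apply T u (nf k) c).symm
      have h2 : w i (r i + (u + nf k)) = w i ((r i + πn i) + u) := by
        apply hwcongr
        have hkm : nf k ≡ πn i [MOD N i] := by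
          show nf k % N i = πn i % N i
          rw [hk, Nat.mod_eq_of_lt (hπnlt i)]
        have heq : (r i + πn i) + u = r i + (u + πn i) := by omega
        rw [heq]
        exact Nat.ModEq.add_left _ (Nat.ModEq.add_left _ hkm)
      rw [h1, ← h2]
      exact hc i (u + nf k)
    have hPD1 : ∀ i u, dist (T^[u] D) (w i ((πs i + πn i) + u)) ≤ 2 * η i :=
      hPDgen a πs hPa hD
    have hPD2 : ∀ i u, dist (T^[u] D) (w i ((πt i + πn i) + u)) ≤ 2 * η i :=
      hPDgen b πt hPb (hab ▸ hD)
    -- A = D = B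
    have hAD : A = D := hsing _ A D hPA hPD1
    have hBD : B = D := hsing _ B D hPB hPD2
    -- but dist A B ≥ e
    have hABge : e ≤ dist A B := by
      refine ge_of_tendsto (hA.dist hB) ?_
      refine Filter.Eventually.filter_mono h𝒱le (Filter.eventually_atTop.2 ⟨0, fun k _ => ?_⟩)
      exact (h2 k).le
    rw [hAD, hBD, dist_self] at hABge
    exact absurd hABge (not_le.2 he)
  
  -- extension of equicontinuity to the orbit closure
  have hEQc : ∀ e : ℝ, 0 < e → ∃ θ : ℝ, 0 < θ ∧ ∀ a b : X,
      a ∈ orbitClosure T z → b ∈ orbitClosure T z → dist a b < θ →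
      ∀ n : ℕ, dist (T^[n] a) (T^[n] b) ≤ e := by
    intro e he
    obtain ⟨θ, hθ, hq⟩ := hEQ e he
    refine ⟨θ, hθ, ?_⟩
    intro a b haoc hboc hab n
    rw [orbitClosure] at haoc hboc
    obtain ⟨va, hva, hvalim⟩ := mem_closure_iff_seq_limit.1 haoc
    obtain ⟨vb, hvb, hvblim⟩ := mem_closure_iff_seq_limit.1 hboc
    choose sa hsa using hva
    choose sb hsb using hvb
    have hdlim : Tendsto (fun l => dist (va l) (vb l)) atTop (𝓝 (dist a b)) :=
      hvalim.dist hvblim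
    have hev : ∀ᶠ l in atTop, dist (va l) (vb l) < θ :=
      hdlim.eventually (eventually_lt_nhds hab)
    have hlim2 : Tendsto (fun l => dist (T^[n] (va l)) (T^[n] (vb l))) atTop
        (𝓝 (dist (T^[n] a) (T^[n] b))) :=
      (((hTn n).tendsto a).comp hvalim).dist (((hTn n).tendsto b).comp hvblim)
    refine le_of_tendsto hlim2 ?_
    filter_upwards [hev] with l hl
    have e1 : T^[n] (va l) = T^[sa l + n] z := by
      rw [← hsa l, ← Function.iterate_add_apply, Nat.add_comm]
    have e2 : T^[n] (vb l) = T^[sb l + n] z := by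
      rw [← hsb l, ← Function.iterate_add_apply, Nat.add_comm]
    rw [e1, e2]
    apply hq
    have hsa' : T^[sa l] z = va l := hsa l
    have hsb' : T^[sb l] z = vb l := hsb l
    rw [hsa', hsb']
    exact hl
  -- the orbit closure is invariant
  have hzoc : z ∈ orbitClosure T z := by
    apply subset_closure
    exact ⟨0, rfl⟩
  have hMT : Set.MapsTo T (orbitClosure T z) (orbitClosure T z) := by
    intro p hp
    rw [orbitClosure] at hp ⊢
    have h1 : T '' closure (Set.range fun n => T^[n] z) ⊆
        closure (T '' Set.range fun n => T^[n] z) := image_closure_subset_closure_image hT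
    have h2 : (T '' Set.range fun n => T^[n] z) ⊆ Set.range fun n => T^[n] z := by
      rintro _ ⟨_, ⟨n, rfl⟩, rfl⟩
      refine ⟨n + 1, ?_⟩
      show T^[n + 1] z = T (T^[n] z)
      exact Function.iterate_succ_apply' T n z
    exact closure_mono h2 (h1 ⟨p, hp, rfl⟩)
  -- the restricted system
  have hScoe : ∀ (m : ℕ) (p : ↥(orbitClosure T z)),
      (((Set.MapsTo.restrict T _ _ hMT)^[m] p : ↥(orbitClosure T z)) : X) = T^[m] (p : X) := by
    intro m
    induction m with
    | zero => intro p; simp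
    | succ m ih =>
      intro p
      rw [Function.iterate_succ_apply', Function.iterate_succ_apply',
        Set.MapsTo.val_restrict_apply, ih p]
  have hEquic : Equicontinuous (fun n : ℕ => (Set.MapsTo.restrict T _ _ hMT)^[n]) := by
    apply UniformEquicontinuous.equicontinuous
    rw [Metric.uniformEquicontinuous_iff]
    intro e he
    obtain ⟨θ, hθ, hqc⟩ := hEQc (e / 2) (half_pos he)
    refine ⟨θ, hθ, ?_⟩
    intro p p' hpp' n
    rw [Subtype.dist_eq, hScoe n p, hScoe n p']
    rw [Subtype.dist_eq] at hpp'
    have := hqc (p : X) (p' : X) p.2 p'.2 hpp' n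
    linarith
  have hRRS : RegularlyRecurrent (Set.MapsTo.restrict T _ _ hMT) ⟨z, hzoc⟩ := by
    intro U hU
    rw [mem_nhds_subtype] at hU
    obtain ⟨V, hV, hVU⟩ := hU
    obtain ⟨k, hk, hkV⟩ := hRRzX V hV
    refine ⟨k, hk, fun n => ?_⟩
    apply hVU
    show (((Set.MapsTo.restrict T _ _ hMT)^[k * n] ⟨z, hzoc⟩ : ↥(orbitClosure T z)) : X) ∈ V
    rw [hScoe]
    exact hkV n
  have hdense : Dense (Set.range fun n : ℕ => (Set.MapsTo.restrict T _ _ hMT)^[n] ⟨z, hzoc⟩) := by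
    intro p
    rw [closure_subtype]
    have himg : (Subtype.val '' Set.range fun n : ℕ =>
        (Set.MapsTo.restrict T _ _ hMT)^[n] ⟨z, hzoc⟩) = Set.range fun n => T^[n] z := by
      rw [← Set.range_comp]
      have hfun : (Subtype.val ∘ fun n : ℕ => (Set.MapsTo.restrict T _ _ hMT)^[n] ⟨z, hzoc⟩) =
          fun n : ℕ => T^[n] z := funext fun m => hScoe m _
      rw [hfun]
    rw [himg]
    exact p.2
  exact ⟨z, ⟨hMT, hEquic, ⟨z, hzoc⟩, hRRS, hdense⟩, hxz⟩
end

section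
/- Let (X,T) be a weakly mixing dynamical system with the shadowing property. For every ε > 0 there exists M > 0 such that for any k ≥ 2, points x_1,…,x_k ∈ X, integers 0 ≤ a_1 ≤ b_1 < a_2 ≤ b_2 < … < a_k ≤ b_k with a_i − b_{i−1} ≥ M, and any p ≥ M + b_k − a_1, there exists z ∈ X whose orbit closure is an odometer and which satisfies d(T^j(z), T^{np+j}(z)) < ε for all n, j ≥ 0 and d(T^{np+j}(z), T^j(x_i)) < ε for all a_i ≤ j ≤ b_i, 1 ≤ i ≤ k, n ≥ 0. -/
open Filter

def TopTransitiveA {Y : Type*} [TopologicalSpace Y] (S : Y → Y) : Prop :=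
  ∀ U V : Set Y, IsOpen U → IsOpen V → U.Nonempty → V.Nonempty →
    ∃ n : ℕ, 0 < n ∧ (S^[n] '' U ∩ V).Nonempty

section AuxChains
set_option linter.unusedSectionVars false
variable {X : Type*} [MetricSpace X] [CompactSpace X] {T : X → X}

def ChainFrom (T : X → X) (r : ℝ) (n : ℕ) (x y : X) : Prop :=
  ∃ c : ℕ → X, c 0 = x ∧ c n = y ∧ ∀ j < n, dist (T (c j)) (c (j + 1)) < r

theorem pair_chains (hT : Continuous T) (hwm : TopTransitiveA (Prod.map T T))
    {r : ℝ} (hr : 0 < r) (x y x2 y2 : X) :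
    ∃ n, 0 < n ∧ ChainFrom T r n x y ∧ ChainFrom T r n x2 y2 := by
  obtain ⟨s, hs, hsT⟩ : ∃ s > 0, ∀ u v : X, dist u v < s → dist (T u) (T v) < r / 2 := by
    have := (Metric.uniformContinuous_iff.mp
      (CompactSpace.uniformContinuous_of_continuous hT)) (r / 2) (by linarith)
    obtain ⟨δ, hδ, h⟩ := this
    exact ⟨δ, hδ, fun u v huv => h huv⟩
  obtain ⟨n, hn, ⟨pt, hptU, hptV⟩⟩ := hwm (Metric.ball x s ×ˢ Metric.ball x2 s)
    (Metric.ball y (r/2) ×ˢ Metric.ball y2 (r/2))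
    (Metric.isOpen_ball.prod Metric.isOpen_ball) (Metric.isOpen_ball.prod Metric.isOpen_ball)
    ⟨(x, x2), by simp [hs]⟩ ⟨(y, y2), by constructor <;> simp <;> linarith⟩
  obtain ⟨⟨u, u2⟩, huU, hu_eq⟩ := hptU
  rw [Prod.map_iterate] at hu_eq
  have huU' : u ∈ Metric.ball x s ∧ u2 ∈ Metric.ball x2 s := by
    simpa [Set.mem_prod] using huU
  rw [← hu_eq] at hptV
  have hV : T^[n] u ∈ Metric.ball y (r/2) ∧ T^[n] u2 ∈ Metric.ball y2 (r/2) := by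
    simpa [Set.mem_prod, Prod.map] using hptV
  have build : ∀ (x' y' u' : X), dist u' x' < s → dist (T^[n] u') y' < r/2 →
      ChainFrom T r n x' y' := by
    intro x' y' u' hux hun
    refine ⟨fun j => if j = 0 then x' else if j = n then y' else T^[j] u', by simp,
      by simp [hn.ne'], ?_⟩
    intro j hj
    rcases Nat.eq_or_lt_of_le (Nat.one_le_iff_ne_zero.mpr (by omega : n ≠ 0)) with h1 | h1
    · -- n = 1, j = 0
      have hj0 : j = 0 := by omega
      subst hj0
      simp only [if_pos rfl, ← h1, if_pos]
      calc dist (T x') y' ≤ dist (T x') (T u') + dist (T u') y' := dist_triangle _ _ _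
        _ < r/2 + r/2 := by
            refine add_lt_add (hsT _ _ (by rw [dist_comm] at hux; exact hux)) ?_
            rw [← h1] at hun; simpa using hun
        _ = r := by ring
    · rcases Nat.eq_zero_or_pos j with hj0 | hjpos
      · subst hj0
        have : (1 : ℕ) ≠ n → ((if (1:ℕ) = n then y' else T^[1] u') = T^[1] u') := by
          intro h; simp [h]
        simp only [if_pos rfl]
        by_cases h1n : 1 = n
        · omega
        · simp only [if_neg (by omega : (1:ℕ) ≠ 0), if_neg h1n]
          have : dist (T x') (T u') < r / 2 := hsT _ _ (by rw [dist_comm] at hux; exact hux)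
          simpa using this.trans (by linarith)
      · by_cases hjn : j + 1 = n
        · have : j ≠ 0 ∧ j ≠ n := ⟨by omega, by omega⟩
          simp only [if_neg this.1, if_neg this.2, if_neg (by omega : j + 1 ≠ 0), if_pos hjn]
          have : T (T^[j] u') = T^[j+1] u' := (Function.iterate_succ_apply' T j u').symm
          rw [this, hjn]
          exact hun.trans (by linarith)
        · have : j ≠ 0 ∧ j ≠ n := ⟨by omega, by omega⟩
          simp only [if_neg this.1, if_neg this.2, if_neg (by omega : j + 1 ≠ 0), if_neg hjn]
          have : T (T^[j] u') = T^[j+1] u' := (Function.iterate_succ_apply' T j u').symm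
          rw [this]
          simpa using hr
  exact ⟨n, hn, build x y u (Metric.mem_ball.mp huU'.1) (Metric.mem_ball.mp hV.1),
    build x2 y2 u2 (Metric.mem_ball.mp huU'.2) (Metric.mem_ball.mp hV.2)⟩

end AuxChains

section AuxChains2
set_option linter.unusedSectionVars false
variable {X : Type*} [MetricSpace X] [CompactSpace X] {T : X → X}

theorem chain_trivial' (T : X → X) (r : ℝ) (x : X) : ChainFrom T r 0 x x :=
  ⟨fun _ => x, rfl, rfl, by omega⟩

theorem chain_concat' {r : ℝ} {n m : ℕ} {x y w : X}
    (h1 : ChainFrom T r n x y) (h2 : ChainFrom T r m y w) :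
    ChainFrom T r (n + m) x w := by
  obtain ⟨c1, hc10, hc1n, hc1⟩ := h1
  obtain ⟨c2, hc20, hc2m, hc2⟩ := h2
  set c : ℕ → X := fun j => if j ≤ n then c1 j else c2 (j - n) with hc
  have key : ∀ j, n ≤ j → c j = c2 (j - n) := by
    intro j hj
    rcases eq_or_lt_of_le hj with h | h
    · simp [hc, ← h, hc1n, hc20]
    · simp [hc, show ¬ j ≤ n by omega]
  refine ⟨c, by simp [hc, hc10], ?_, ?_⟩
  · rw [key (n + m) (by omega)]
    simpa using hc2m
  · intro j hj
    by_cases h : j + 1 ≤ n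
    · have e1 : c j = c1 j := by simp [hc, show j ≤ n by omega]
      have e2 : c (j + 1) = c1 (j + 1) := by simp [hc, h]
      rw [e1, e2]; exact hc1 j (by omega)
    · have e1 : c j = c2 (j - n) := key j (by omega)
      have e2 : c (j + 1) = c2 (j - n + 1) := by
        rw [key (j + 1) (by omega)]; congr 1; omega
      rw [e1, e2]; exact hc2 (j - n) (by omega)

theorem chain_loops_mult {r : ℝ} {m : ℕ} {y : X} (h : ChainFrom T r m y y) :
    ∀ a : ℕ, ChainFrom T r (a * m) y y := by
  intro a
  induction a with
  | zero => simpa using chain_trivial' T r y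
  | succ a ih => have := chain_concat' ih h; rwa [show a * m + m = (a + 1) * m by ring] at this

theorem loops_all (hT : Continuous T) (hwm : TopTransitiveA (Prod.map T T))
    {r : ℝ} (hr : 0 < r) (y : X) :
    ∃ m, 0 < m ∧ ∀ N, m * m ≤ N → ChainFrom T r N y y := by
  obtain ⟨n, hn, h1, h2⟩ := pair_chains hT hwm hr y y (T y) y
  -- h2 : chain T y → y of length n; prepend y
  have h3 : ChainFrom T r (n + 1) y y := by
    obtain ⟨c2, hc20, hc2n, hc2⟩ := h2
    refine ⟨fun j => if j = 0 then y else c2 (j - 1), by simp, by simpa using hc2n, ?_⟩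
    intro j hj
    rcases Nat.eq_zero_or_pos j with rfl | hjpos
    · simp [hc20, hr]
    · simp only [if_neg hjpos.ne', if_neg (by omega : j + 1 ≠ 0)]
      have e : j + 1 - 1 = (j - 1) + 1 := by omega
      rw [e]
      exact hc2 (j - 1) (by omega)
  refine ⟨n, hn, ?_⟩
  intro N hN
  have hdm : n * (N / n) + N % n = N := Nat.div_add_mod N n
  have hrn : N % n < n := Nat.mod_lt _ hn
  have hqn : n ≤ N / n := by
    by_contra hcon
    push_neg at hcon
    have h1' : n * (N / n) + n ≤ n * n := by
      calc n * (N / n) + n = n * (N / n + 1) := by ring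
        _ ≤ n * n := Nat.mul_le_mul_left n (by omega)
    omega
  have big := chain_concat' (chain_loops_mult h1 (N / n - N % n)) (chain_loops_mult h3 (N % n))
  have heq : (N / n - N % n) * n + N % n * (n + 1) = N := by
    have h1' : (N / n - N % n) * n = (N / n) * n - (N % n) * n := by rw [Nat.sub_mul]
    have h2' : (N % n) * n ≤ (N / n) * n := Nat.mul_le_mul_right n (by omega)
    have h3' : (N % n) * (n + 1) = (N % n) * n + N % n := by ring
    have h4' : (N / n) * n = n * (N / n) := by ring
    omega
  rwa [heq] at big

theorem chain_all (hT : Continuous T) (hwm : TopTransitiveA (Prod.map T T))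
    {r : ℝ} (hr : 0 < r) (u v : X) :
    ∃ N0, ∀ n, N0 ≤ n → ChainFrom T r n u v := by
  obtain ⟨n0, hn0, hch, _⟩ := pair_chains hT hwm hr u v u v
  obtain ⟨m, hm, hloops⟩ := loops_all hT hwm hr v
  refine ⟨n0 + m * m, fun n hn => ?_⟩
  have := chain_concat' hch (hloops (n - n0) (by omega))
  rwa [show n0 + (n - n0) = n by omega] at this

theorem chain_uniform (hT : Continuous T) (hwm : TopTransitiveA (Prod.map T T))
    {r : ℝ} (hr : 0 < r) :
    ∃ M, 0 < M ∧ ∀ x y n, M ≤ n → ChainFrom T r n x y := by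
  have hr3 : 0 < r / 3 := by linarith
  obtain ⟨F, hFfin, hFcov⟩ := Metric.totallyBounded_iff.mp
    (isCompact_univ (X := X)).totallyBounded (r / 3) hr3
  choose g hg using fun (u v : X) => chain_all hT hwm hr3 u v
  classical
  set M := (hFfin.toFinset ×ˢ hFfin.toFinset).sup (fun p => g p.1 p.2) + 2 with hM
  refine ⟨M, by omega, ?_⟩
  intro x y n hn
  obtain ⟨u, huF, hux⟩ : ∃ u ∈ F, T x ∈ Metric.ball u (r/3) := by
    have := hFcov (Set.mem_univ (T x)); simpa using this
  obtain ⟨v, hvF, hvy⟩ : ∃ v ∈ F, y ∈ Metric.ball v (r/3) := by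
    have := hFcov (Set.mem_univ y); simpa using this
  have hguv : g u v + 2 ≤ M := by
    have : g u v ≤ (hFfin.toFinset ×ˢ hFfin.toFinset).sup (fun p => g p.1 p.2) :=
      Finset.le_sup (f := fun p : X × X => g p.1 p.2) (b := (u, v))
        (Finset.mem_product.mpr ⟨hFfin.mem_toFinset.mpr huF, hFfin.mem_toFinset.mpr hvF⟩)
    omega
  obtain ⟨ch, hch0, hchn, hch⟩ := hg u v (n - 1) (by omega)
  have hn2 : 2 ≤ n := by omega
  refine ⟨fun j => if j = 0 then x else if j = n then y else ch (j - 1), by simp,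
    by simp [(show n ≠ 0 by omega)], ?_⟩
  intro j hj
  rcases Nat.eq_zero_or_pos j with rfl | hjpos
  · simp only [if_pos rfl, if_neg (by omega : (1:ℕ) ≠ 0), if_neg (by omega : 1 ≠ n)]
    have : dist (T x) (ch 0) < r / 3 := by rw [hch0]; exact Metric.mem_ball.mp hux
    calc dist (T x) (ch (1 - 1)) = dist (T x) (ch 0) := by norm_num
      _ < r / 3 := this
      _ < r := by linarith
  · by_cases hjn : j + 1 = n
    · simp only [if_neg hjpos.ne', if_neg (by omega : j ≠ n), if_neg (by omega : j + 1 ≠ 0),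
        if_pos hjn]
      have hlast : dist (T (ch (j - 1))) (ch j) < r / 3 := by
        have := hch (j - 1) (by omega)
        rwa [show j - 1 + 1 = j by omega] at this
      have hvy' : dist (ch j) y < r / 3 := by
        have : ch j = v := by rw [show j = n - 1 by omega, hchn]
        rw [this, dist_comm]; exact Metric.mem_ball.mp hvy
      calc dist (T (ch (j - 1))) y ≤ dist (T (ch (j - 1))) (ch j) + dist (ch j) y :=
            dist_triangle _ _ _
        _ < r / 3 + r / 3 := add_lt_add hlast hvy'
        _ < r := by linarith
    · simp only [if_neg hjpos.ne', if_neg (by omega : j ≠ n), if_neg (by omega : j + 1 ≠ 0),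
        if_neg hjn]
      have := hch (j - 1) (by omega)
      rw [show j - 1 + 1 = j + 1 - 1 by omega] at this
      exact this.trans (by linarith)

theorem pigeon_dist (f : ℕ → X) {r : ℝ} (hr : 0 < r) :
    ∃ n1 n2, n1 < n2 ∧ dist (f n1) (f n2) < r := by
  obtain ⟨F, hFfin, hFcov⟩ := Metric.totallyBounded_iff.mp
    (isCompact_univ (X := X)).totallyBounded (r / 2) (by linarith)
  have : ∀ n : ℕ, ∃ u : F, f n ∈ Metric.ball (u : X) (r / 2) := by
    intro n
    have := hFcov (Set.mem_univ (f n))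
    simp only [Set.mem_iUnion] at this
    obtain ⟨u, hu, h⟩ := this
    exact ⟨⟨u, hu⟩, h⟩
  choose gc hgc using this
  have : Finite F := hFfin.to_subtype
  obtain ⟨n1, n2, hne, heq⟩ := Finite.exists_ne_map_eq_of_infinite gc
  have hd : dist (f n1) (f n2) < r := by
    calc dist (f n1) (f n2) ≤ dist (f n1) (gc n1 : X) + dist (gc n2 : X) (f n2) := by
          rw [heq]; exact dist_triangle _ _ _
      _ < r / 2 + r / 2 := add_lt_add (Metric.mem_ball.mp (hgc n1))
          (by rw [dist_comm]; exact Metric.mem_ball.mp (hgc n2))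
      _ = r := by ring
  rcases lt_or_gt_of_ne hne with h | h
  · exact ⟨n1, n2, h, hd⟩
  · exact ⟨n2, n1, h, by rwa [dist_comm]⟩





theorem periodic_mult {Y : Type*} {ξ : ℕ → Y} {q : ℕ} (hper : ∀ j, ξ (j + q) = ξ j) :
    ∀ (n j : ℕ), ξ (j + n * q) = ξ j := by
  intro n
  induction n with
  | zero => simp
  | succ n ih =>
    intro j
    have : j + (n + 1) * q = (j + q) + n * q := by ring
    rw [this, ih, hper]


set_option maxHeartbeats 1000000
theorem step_lemma_s13 {t' : ℝ} (ht' : 0 < t')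
    (hshT : ∃ δ > (0:ℝ), ∀ xs : ℕ → X,
      (∀ n, dist (T (xs n)) (xs (n + 1)) < δ) → ∃ y, ∀ n, dist (T^[n] y) (xs n) < t')
    {z : X} {q : ℕ} {ξ : ℕ → X} {t : ℝ}
    (hq : 0 < q) (hper : ∀ j, ξ (j + q) = ξ j) (hshadow : ∀ j, dist (T^[j] z) (ξ j) < t) :
    ∃ (z' : X) (q' : ℕ) (ξ' : ℕ → X), 0 < q' ∧ q ∣ q' ∧ (∀ j, ξ' (j + q') = ξ' j) ∧
      (∀ j, dist (T^[j] z') (ξ' j) < t') ∧ (∀ j, dist (ξ' j) (ξ j) < t) := by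
  obtain ⟨δ, hδ, hδsh⟩ := hshT
  obtain ⟨n1, n2, hlt, hd⟩ := pigeon_dist (fun n => T^[n * q] z) hδ
  set q' := (n2 - n1) * q with hq'def
  have hq' : 0 < q' := Nat.mul_pos (by omega) hq
  set y := T^[n1 * q] z with hydef
  set ξ' : ℕ → X := fun j => T^[j % q'] y with hξ'def
  have hdvd : q ∣ q' := ⟨n2 - n1, by rw [hq'def]; ring⟩
  have hwrap : dist (T^[q'] y) y < δ := by
    have e : T^[q'] y = T^[n2 * q] z := by
      rw [hydef, ← Function.iterate_add_apply]
      congr 1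
      have : (n2 - n1) * q = n2 * q - n1 * q := Nat.sub_mul n2 n1 q
      have h2 : n1 * q ≤ n2 * q := Nat.mul_le_mul_right q (by omega)
      omega
    rw [e, hydef, dist_comm]
    exact hd
  have hjump : ∀ j, dist (T (ξ' j)) (ξ' (j + 1)) < δ := by
    intro j
    have hmod : j % q' < q' := Nat.mod_lt _ hq'
    have hTξ : T (ξ' j) = T^[j % q' + 1] y := by
      simp only [hξ'def]
      rw [Function.iterate_succ_apply']
    by_cases hc : j % q' + 1 < q'
    · have e : (j + 1) % q' = j % q' + 1 := by
        rw [← Nat.mod_add_mod]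
        exact Nat.mod_eq_of_lt hc
      rw [hTξ]
      simp only [hξ'def, e, dist_self]
      exact hδ
    · have hceq : j % q' + 1 = q' := by omega
      have e : (j + 1) % q' = 0 := by
        have h1 := Nat.div_add_mod j q'
        have e2 : j + 1 = (j / q' + 1) * q' := by
          have : (j / q' + 1) * q' = q' * (j / q') + q' := by ring
          omega
        rw [e2]
        exact Nat.mul_mod_left _ _
      rw [hTξ, hceq]
      simp only [hξ'def, e]
      simpa using hwrap
  obtain ⟨z', hz'⟩ := hδsh ξ' hjump
  have hxiq' : ∀ j, ξ j = ξ (j % q') := by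
    intro j
    obtain ⟨c, hc⟩ := hdvd
    have e : j = j % q' + ((j / q') * c) * q := by
      have h1 := Nat.div_add_mod j q'
      have h2 : ((j / q') * c) * q = (j / q') * q' := by rw [hc]; ring
      have h3 : (j / q') * q' = q' * (j / q') := by ring
      omega
    conv_lhs => rw [e, periodic_mult hper]
  refine ⟨z', q', ξ', hq', hdvd, ?_, hz', ?_⟩
  · intro j
    simp only [hξ'def, Nat.add_mod_right]
  · intro j
    have e : ξ' j = T^[j % q' + n1 * q] z := by
      simp only [hξ'def, hydef]
      rw [← Function.iterate_add_apply]
    rw [e, hxiq' j]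
    have := hshadow (j % q' + n1 * q)
    rwa [periodic_mult hper n1 (j % q')] at this


theorem base_induct {δ : ℝ} (hδ : 0 < δ) {M : ℕ} (hM : 0 < M)
    (CH : ∀ (x y : X) (n : ℕ), M ≤ n → ChainFrom T δ n x y)
    {k : ℕ} (hk0 : 0 < k) (x : Fin k → X) (a b : Fin k → ℕ) (a0 : ℕ)
    (ha0 : a0 = a ⟨0, hk0⟩)
    (hab : ∀ i, a i ≤ b i) (horder : ∀ i j : Fin k, i < j → b i < a j)
    (hgap : ∀ i j : Fin k, (i : ℕ) + 1 = (j : ℕ) → b i + M ≤ a j) :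
    ∀ i : ℕ, ∀ hi : i < k, ∃ w : ℕ → X,
      (∀ t, dist (T (w t)) (w (t + 1)) < δ) ∧
      (∀ i' : Fin k, (i' : ℕ) ≤ i → ∀ t, a i' ≤ a0 + t → a0 + t ≤ b i' →
        w t = T^[a0 + t] (x i')) ∧
      (∀ t, b ⟨i, hi⟩ ≤ a0 + t → w t = T^[a0 + t] (x ⟨i, hi⟩)) := by
  intro i
  induction i with
  | zero =>
    intro hi
    refine ⟨fun t => T^[a0 + t] (x ⟨0, hi⟩), ?_, ?_, ?_⟩
    · intro t
      have e : T (T^[a0 + t] (x ⟨0, hi⟩)) = T^[a0 + (t + 1)] (x ⟨0, hi⟩) := by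
        rw [show a0 + (t + 1) = (a0 + t) + 1 by ring, Function.iterate_succ_apply']
      rw [e]
      simpa using hδ
    · intro i' hi' t _ _
      have h0 : (i' : ℕ) = 0 := by omega
      have : i' = ⟨0, hi⟩ := Fin.ext (by simp [h0])
      rw [this]
    · intro t _
      rfl
  | succ i ih =>
    intro hi
    obtain ⟨w, hjw, hseg, htail⟩ := ih (by omega)
    have hBA : b ⟨i, by omega⟩ + M ≤ a ⟨i + 1, hi⟩ := hgap ⟨i, by omega⟩ ⟨i + 1, hi⟩ rfl
    obtain ⟨ch, hch0, hchE, hch⟩ := CH (T^[b ⟨i, by omega⟩] (x ⟨i, by omega⟩))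
      (T^[a ⟨i + 1, hi⟩] (x ⟨i + 1, hi⟩)) (a ⟨i + 1, hi⟩ - b ⟨i, by omega⟩) (by omega)
    set B : ℕ := b ⟨i, by omega⟩ with hBdef
    set A : ℕ := a ⟨i + 1, hi⟩ with hAdef
    set w' : ℕ → X := fun t => if a0 + t ≤ B then w t
      else if a0 + t < A then ch (a0 + t - B)
      else T^[a0 + t] (x ⟨i + 1, hi⟩) with hw'def
    have h1 : ∀ t, B ≤ a0 + t → a0 + t ≤ A → w' t = ch (a0 + t - B) := by
      intro t h1' h2'
      by_cases hc : a0 + t ≤ B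
      · have he : a0 + t = B := by omega
        simp only [hw'def, if_pos hc]
        rw [htail t (by omega), he, Nat.sub_self]
        exact hch0.symm
      · by_cases hc2 : a0 + t < A
        · simp [hw'def, hc, hc2]
        · have he : a0 + t = A := by omega
          simp only [hw'def, if_neg hc, if_neg hc2]
          rw [he]
          rw [show A - B = a ⟨i + 1, hi⟩ - b ⟨i, by omega⟩ from rfl] at hchE
          rw [hchE]
    refine ⟨w', ?_, ?_, ?_⟩
    · intro t
      rcases (by omega : a0 + t + 1 ≤ B ∨ (B ≤ a0 + t ∧ a0 + t + 1 ≤ A) ∨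
          A ≤ a0 + t) with hc | hc | hc
      · have e1 : w' t = w t := by simp [hw'def, show a0 + t ≤ B by omega]
        have e2 : w' (t + 1) = w (t + 1) := by
          simp [hw'def, show a0 + (t + 1) ≤ B by omega]
        rw [e1, e2]; exact hjw t
      · have e1 : w' t = ch (a0 + t - B) := h1 t hc.1 (by omega)
        have e2 : w' (t + 1) = ch (a0 + t + 1 - B) := by
          rw [h1 (t + 1) (by omega) (by omega)]
          exact congrArg ch (by omega)
        rw [e1, e2, show a0 + t + 1 - B = (a0 + t - B) + 1 by omega]
        exact hch (a0 + t - B) (by omega)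
      · have e1 : w' t = T^[a0 + t] (x ⟨i + 1, hi⟩) := by
          simp [hw'def, show ¬ (a0 + t ≤ B) by omega, show ¬ (a0 + t < A) by omega]
        have e2 : w' (t + 1) = T^[a0 + (t + 1)] (x ⟨i + 1, hi⟩) := by
          simp [hw'def, show ¬ (a0 + (t + 1) ≤ B) by omega,
            show ¬ (a0 + (t + 1) < A) by omega]
        rw [e1, e2, show a0 + (t + 1) = (a0 + t) + 1 by ring,
          Function.iterate_succ_apply']
        simpa using hδ
    · intro i' hi' t h1' h2'
      by_cases hc : (i' : ℕ) ≤ i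
      · have hble : b i' ≤ B := by
          rcases eq_or_lt_of_le hc with h | h
          · have : i' = ⟨i, by omega⟩ := Fin.ext (by simp [h])
            rw [hBdef, this]
          · have hlt : i' < (⟨i, by omega⟩ : Fin k) := by
              simpa [Fin.lt_def] using h
            have h3 := horder i' ⟨i, by omega⟩ hlt
            have h4 := hab (⟨i, by omega⟩ : Fin k)
            omega
        have e1 : w' t = w t := by simp [hw'def, show a0 + t ≤ B by omega]
        rw [e1]
        exact hseg i' hc t h1' h2'
      · have he : i' = ⟨i + 1, hi⟩ := Fin.ext (by simp; omega)
        subst he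
        have ha' : A ≤ a0 + t := h1'
        simp [hw'def, show ¬ (a0 + t ≤ B) by omega, show ¬ (a0 + t < A) by omega]
    · intro t h1'
      have haJ : A ≤ b ⟨i + 1, hi⟩ := hab ⟨i + 1, hi⟩
      have hb' : b ⟨i + 1, hi⟩ ≤ a0 + t := h1'
      simp [hw'def, show ¬ (a0 + t ≤ B) by omega, show ¬ (a0 + t < A) by omega]

theorem base_orbit {δ : ℝ} (hδ : 0 < δ) {M : ℕ} (hM : 0 < M)
    (CH : ∀ (x y : X) (n : ℕ), M ≤ n → ChainFrom T δ n x y)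
    {k : ℕ} (hk : 2 ≤ k) (x : Fin k → X) (a b : Fin k → ℕ)
    (hab : ∀ i, a i ≤ b i) (horder : ∀ i j : Fin k, i < j → b i < a j)
    (hgap : ∀ i j : Fin k, (i : ℕ) + 1 = (j : ℕ) → b i + M ≤ a j)
    (p : ℕ) (hp : M + b ⟨k - 1, by omega⟩ - a ⟨0, by omega⟩ ≤ p) :
    ∃ ξ0 : ℕ → X, (∀ j, ξ0 (j + p) = ξ0 j) ∧ (∀ j, dist (T (ξ0 j)) (ξ0 (j + 1)) < δ) ∧
      (∀ (i : Fin k) (j : ℕ), a i ≤ j → j ≤ b i → ξ0 j = T^[j] (x i)) := by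
  have hk0 : 0 < k := by omega
  have hkk : k - 1 < k := by omega
  have hp2 : M + b ⟨k - 1, hkk⟩ - a ⟨0, hk0⟩ ≤ p := hp
  obtain ⟨w, hjw, hseg, htail⟩ :=
    base_induct hδ hM CH hk0 x a b (a ⟨0, hk0⟩) rfl hab horder hgap (k - 1) hkk
  have ha0B' : a ⟨0, hk0⟩ ≤ b ⟨k - 1, hkk⟩ := by
    rcases eq_or_lt_of_le (Nat.le_sub_one_of_lt (show (0:ℕ) < k by omega)) with h | h
    · have he : (⟨0, hk0⟩ : Fin k) = ⟨k - 1, hkk⟩ := Fin.ext (by simpa using h)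
      rw [he]; exact hab _
    · have hlt : (⟨0, hk0⟩ : Fin k) < ⟨k - 1, hkk⟩ := by simpa [Fin.lt_def] using h
      have h3 := horder _ _ hlt
      have h4 := hab (⟨k - 1, hkk⟩ : Fin k)
      have h5 := hab (⟨0, hk0⟩ : Fin k)
      omega
  have hmono_a : ∀ i : Fin k, a ⟨0, hk0⟩ ≤ a i := by
    intro i
    rcases Nat.eq_zero_or_pos (i : ℕ) with h | h
    · have : i = ⟨0, hk0⟩ := Fin.ext (by simp [h])
      rw [this]
    · have hlt : (⟨0, hk0⟩ : Fin k) < i := by simpa [Fin.lt_def] using h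
      have h1 := horder _ _ hlt
      have h2 := hab (⟨0, hk0⟩ : Fin k)
      omega
  have hmono_b : ∀ i : Fin k, b i ≤ b ⟨k - 1, hkk⟩ := by
    intro i
    rcases eq_or_lt_of_le (Nat.le_sub_one_of_lt i.isLt) with h | h
    · have : i = ⟨k - 1, hkk⟩ := Fin.ext (by simpa using h)
      rw [this]
    · have hlt : i < (⟨k - 1, hkk⟩ : Fin k) := by simpa [Fin.lt_def] using h
      have h1 := horder _ _ hlt
      have h2 := hab (⟨k - 1, hkk⟩ : Fin k)
      omega
  have hppos : 0 < p := by omega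
  have hB'lt : b ⟨k - 1, hkk⟩ < a ⟨0, hk0⟩ + p := by omega
  have hLwM : M ≤ p + a ⟨0, hk0⟩ - b ⟨k - 1, hkk⟩ := by omega
  obtain ⟨wc, hwc0, hwcE, hwc⟩ := CH (T^[b ⟨k - 1, hkk⟩] (x ⟨k - 1, hkk⟩))
    (T^[a ⟨0, hk0⟩] (x ⟨0, hk0⟩)) (p + a ⟨0, hk0⟩ - b ⟨k - 1, hkk⟩) hLwM
  set a0 := a ⟨0, hk0⟩ with ha0def
  set B' := b ⟨k - 1, hkk⟩ with hB'def
  set Lw := p + a0 - B' with hLwdef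
  set W : ℕ → X := fun t => if a0 + t ≤ B' then w t else wc (a0 + t - B') with hWdef
  have htail' : ∀ t, B' ≤ a0 + t → w t = T^[a0 + t] (x ⟨k - 1, hkk⟩) := htail
  have h2 : ∀ t, B' ≤ a0 + t → W t = wc (a0 + t - B') := by
    intro t ht
    by_cases hc : a0 + t ≤ B'
    · have he : a0 + t = B' := by omega
      simp only [hWdef, if_pos hc]
      rw [htail' t ht, he, Nat.sub_self]
      exact hwc0.symm
    · simp [hWdef, hc]
  have hW0 : W 0 = T^[a0] (x ⟨0, hk0⟩) := by
    have e1 : W 0 = w 0 := by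
      simp only [hWdef]
      rw [if_pos (show a0 + 0 ≤ B' by omega)]
    rw [e1]
    have := hseg ⟨0, hk0⟩ (by simp) 0 (by omega) (by simpa using hab ⟨0, hk0⟩)
    simpa using this
  have hWjump : ∀ t, t < p → dist (T (W t)) (W ((t + 1) % p)) < δ := by
    intro t ht
    by_cases hc : t + 1 < p
    · rw [Nat.mod_eq_of_lt hc]
      rcases (by omega : a0 + t + 1 ≤ B' ∨ B' ≤ a0 + t) with hc2 | hc2
      · have e1 : W t = w t := by simp [hWdef, show a0 + t ≤ B' by omega]
        have e2 : W (t + 1) = w (t + 1) := by simp [hWdef, show a0 + (t + 1) ≤ B' by omega]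
        rw [e1, e2]; exact hjw t
      · have e1 : W t = wc (a0 + t - B') := h2 t hc2
        have e2 : W (t + 1) = wc ((a0 + t - B') + 1) := by
          rw [h2 (t + 1) (by omega)]
          exact congrArg wc (by omega)
        rw [e1, e2]
        exact hwc (a0 + t - B') (by omega)
    · have he : t + 1 = p := by omega
      have e0 : (t + 1) % p = 0 := by rw [he, Nat.mod_self]
      rw [e0]
      have e1 : W t = wc (Lw - 1) := by
        rw [h2 t (by omega)]
        exact congrArg wc (by omega)
      have e2 : W 0 = wc Lw := by rw [hW0, ← hwcE]
      rw [e1, e2, show Lw = (Lw - 1) + 1 by omega]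
      exact hwc (Lw - 1) (by omega)
  have ha0p : a0 ≤ a0 * p := Nat.le_mul_of_pos_right a0 hppos
  refine ⟨fun j => W ((j + a0 * p - a0) % p), ?_, ?_, ?_⟩
  · intro j
    have e : j + p + a0 * p - a0 = (j + a0 * p - a0) + p := by omega
    simp only [e, Nat.add_mod_right]
  · intro j
    show dist (T (W ((j + a0 * p - a0) % p))) (W ((j + 1 + a0 * p - a0) % p)) < δ
    have e : j + 1 + a0 * p - a0 = (j + a0 * p - a0) + 1 := by omega
    have e2 : (j + 1 + a0 * p - a0) % p = ((j + a0 * p - a0) % p + 1) % p := by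
      rw [e, Nat.mod_add_mod]
    rw [e2]
    exact hWjump _ (Nat.mod_lt _ hppos)
  · intro i j hji hjb
    show W ((j + a0 * p - a0) % p) = T^[j] (x i)
    have hja0 : a0 ≤ j := le_trans (hmono_a i) hji
    have hjB' : j ≤ B' := le_trans hjb (hmono_b i)
    have e : j + a0 * p - a0 = (j - a0) + a0 * p := by omega
    have e2 : (j + a0 * p - a0) % p = j - a0 := by
      rw [e, Nat.add_mul_mod_self_right]
      exact Nat.mod_eq_of_lt (by omega)
    rw [e2]
    have e3 : W (j - a0) = w (j - a0) := by simp [hWdef, show a0 + (j - a0) ≤ B' by omega]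
    rw [e3]
    have := hseg i (by omega : (i : ℕ) ≤ k - 1) (j - a0)
      (by omega) (by omega)
    rwa [show a0 + (j - a0) = j by omega] at this

end AuxChains2


/-- Topological transitivity. -/
def TopTransitive {Y : Type*} [TopologicalSpace Y] (S : Y → Y) : Prop :=
  ∀ U V : Set Y, IsOpen U → IsOpen V → U.Nonempty → V.Nonempty →
    ∃ n : ℕ, 0 < n ∧ (S^[n] '' U ∩ V).Nonempty

theorem stmt13 {X : Type*} [MetricSpace X] [CompactSpace X]
    (T : X → X) (hT : Continuous T)
    (hwm : TopTransitive (Prod.map T T)) (hsh : ShadowingProperty T)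
    (ε : ℝ) (hε : 0 < ε) :
    ∃ M : ℕ, 0 < M ∧ ∀ (k : ℕ) (hk : 2 ≤ k) (x : Fin k → X) (a b : Fin k → ℕ),
      (∀ i, a i ≤ b i) → (∀ i j : Fin k, i < j → b i < a j) →
      (∀ i j : Fin k, (i : ℕ) + 1 = (j : ℕ) → b i + M ≤ a j) →
      ∀ p : ℕ, M + b ⟨k - 1, by omega⟩ - a ⟨0, by omega⟩ ≤ p →
      ∃ z : X,
        (∃ h : Set.MapsTo T (orbitClosure T z) (orbitClosure T z),
          IsOdometer (Set.MapsTo.restrict T _ _ h)) ∧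
        (∀ n j : ℕ, dist (T^[j] z) (T^[n * p + j] z) < ε) ∧
        (∀ i : Fin k, ∀ j : ℕ, a i ≤ j → j ≤ b i → ∀ n : ℕ,
          dist (T^[n * p + j] z) (T^[j] (x i)) < ε) := by
  classical
  -- the shadowing modulus
  choose D hD1 hD2 using hsh
  -- scale sequence
  set tt : ℕ → ℝ := fun m => ε / 16 * (1 / 2) ^ m with htt
  have httpos : ∀ m, 0 < tt m := by intro m; positivity
  have httdouble : ∀ m, tt m = 2 * tt (m + 1) := by
    intro m; simp only [htt, pow_succ]; ring
  have httmono : ∀ m m', m ≤ m' → tt m' ≤ tt m := by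
    intro m m' h
    apply mul_le_mul_of_nonneg_left _ (by positivity)
    apply pow_le_pow_of_le_one (by norm_num) (by norm_num) h
  have httsmall : ∀ r : ℝ, 0 < r → ∃ m, tt m < r := by
    intro r hr
    obtain ⟨m, hm⟩ := exists_pow_lt_of_lt_one (show (0:ℝ) < r / (ε / 16) by positivity)
      (show (1:ℝ)/2 < 1 by norm_num)
    refine ⟨m, ?_⟩
    have h16 : (0:ℝ) < ε / 16 := by positivity
    calc tt m = ε / 16 * (1/2)^m := rfl
      _ < ε / 16 * (r / (ε / 16)) := by
          apply mul_lt_mul_of_pos_left hm h16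
      _ = r := by field_simp
  -- uniform chain length for the coarse scale
  obtain ⟨M, hM, CH⟩ := chain_uniform hT hwm (hD1 (tt 0) (httpos 0))
  refine ⟨M, hM, ?_⟩
  intro k hk x a b hab horder hgap p hp
  have hk0 : 0 < k := by omega
  have hkk : k - 1 < k := by omega
  have hlt01 : (⟨0, hk0⟩ : Fin k) < ⟨k - 1, hkk⟩ := by
    simp only [Fin.lt_def]
    omega
  have hb0K : b ⟨0, hk0⟩ < a ⟨k - 1, hkk⟩ := horder _ _ hlt01
  have ha0bK : a ⟨0, hk0⟩ ≤ b ⟨k - 1, hkk⟩ := by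
    have h1 := hab ⟨0, hk0⟩
    have h2 := hab ⟨k - 1, hkk⟩
    omega
  have hp2 : M + b ⟨k - 1, hkk⟩ - a ⟨0, hk0⟩ ≤ p := hp
  have hppos : 0 < p := by omega
  obtain ⟨ξ0, hξ0per, hξ0jump, hξ0seg⟩ :=
    base_orbit (hD1 (tt 0) (httpos 0)) hM CH hk x a b hab horder hgap p hp
  obtain ⟨z0, hz0⟩ := hD2 (tt 0) (httpos 0) ξ0 hξ0jump
  set Good : ℕ → X × ℕ × (ℕ → X) → Prop := fun m s =>
    0 < s.2.1 ∧ (∀ j, s.2.2 (j + s.2.1) = s.2.2 j) ∧ ∀ j, dist (T^[j] s.1) (s.2.2 j) < tt m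
    with hGood
  have hbase : Good 0 (z0, p, ξ0) := ⟨hppos, hξ0per, hz0⟩
  have key : ∀ m s, Good m s → ∃ s' : X × ℕ × (ℕ → X),
      Good (m + 1) s' ∧ s.2.1 ∣ s'.2.1 ∧ ∀ j, dist (s'.2.2 j) (s.2.2 j) < tt m := by
    rintro m ⟨z', q', ξ'⟩ ⟨h1, h2, h3⟩
    obtain ⟨z'', q'', ξ'', hq'', hdvd, hper, hsh'', hclose⟩ :=
      step_lemma_s13 (httpos (m + 1))
        ⟨D (tt (m + 1)) (httpos (m + 1)), hD1 _ _, hD2 _ _⟩ h1 h2 h3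
    exact ⟨(z'', q'', ξ''), ⟨hq'', hper, hsh''⟩, hdvd, hclose⟩
  choose nxt hnxt1 hnxt2 using key
  let seq : ∀ m : ℕ, {s : X × ℕ × (ℕ → X) // Good m s} := fun m =>
    Nat.rec ⟨(z0, p, ξ0), hbase⟩ (fun m ih => ⟨nxt m ih.1 ih.2, hnxt1 m ih.1 ih.2⟩) m
  set Z : ℕ → X := fun m => (seq m).1.1 with hZ
  set Q : ℕ → ℕ := fun m => (seq m).1.2.1 with hQdef
  set XI : ℕ → ℕ → X := fun m => (seq m).1.2.2 with hXIdef
  have hQpos : ∀ m, 0 < Q m := fun m => (seq m).2.1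
  have hXIper : ∀ m j, XI m (j + Q m) = XI m j := fun m => (seq m).2.2.1
  have hZXI : ∀ m j, dist (T^[j] (Z m)) (XI m j) < tt m := fun m => (seq m).2.2.2
  have hlink : ∀ m, Q m ∣ Q (m + 1) ∧ ∀ j, dist (XI (m + 1) j) (XI m j) < tt m := fun m =>
    hnxt2 m (seq m).1 (seq m).2
  have hQ0 : Q 0 = p := rfl
  have hXI0 : ∀ j, XI 0 j = ξ0 j := fun _ => rfl
  have hXItel : ∀ m m' (h : m ≤ m') (j : ℕ),
      dist (XI m' j) (XI m j) ≤ 2 * tt m - 2 * tt m' := by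
    intro m
    refine Nat.le_induction ?_ ?_
    · intro j; simp
    · intro n hn ih j
      calc dist (XI (n + 1) j) (XI m j)
          ≤ dist (XI (n + 1) j) (XI n j) + dist (XI n j) (XI m j) := dist_triangle _ _ _
        _ ≤ tt n + (2 * tt m - 2 * tt n) := add_le_add (le_of_lt ((hlink n).2 j)) (ih j)
        _ = 2 * tt m - 2 * tt (n + 1) := by rw [httdouble n]; ring
  have hZbound : ∀ m m' (h : m ≤ m') (j : ℕ),
      dist (T^[j] (Z m')) (XI m j) ≤ 2 * tt m - tt m' := by
    intro m m' h j
    calc dist (T^[j] (Z m')) (XI m j)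
        ≤ dist (T^[j] (Z m')) (XI m' j) + dist (XI m' j) (XI m j) := dist_triangle _ _ _
      _ ≤ tt m' + (2 * tt m - 2 * tt m') := add_le_add (le_of_lt (hZXI m' j)) (hXItel m m' h j)
      _ = 2 * tt m - tt m' := by ring
  have hcauchy : CauchySeq Z := by
    apply cauchySeq_of_le_geometric (1/2) (3 * (ε / 16)) (by norm_num)
    intro m
    have h1 : dist (Z m) (XI m 0) < tt m := by
      have := hZXI m 0
      rwa [Function.iterate_zero_apply] at this
    have h2 : dist (Z (m + 1)) (XI m 0) ≤ 2 * tt m - tt (m + 1) := by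
      have := hZbound m (m + 1) (by omega) 0
      rwa [Function.iterate_zero_apply] at this
    have h3 := httpos (m + 1)
    calc dist (Z m) (Z (m + 1)) ≤ dist (Z m) (XI m 0) + dist (Z (m + 1)) (XI m 0) :=
          dist_triangle_right _ _ _
      _ ≤ tt m + (2 * tt m - tt (m + 1)) := add_le_add (le_of_lt h1) h2
      _ ≤ 3 * tt m := by linarith
      _ = 3 * (ε / 16) * (1/2)^m := by rw [htt]; ring
  obtain ⟨z, hzlim⟩ := cauchySeq_tendsto_of_complete hcauchy
  have hzXI : ∀ m j, dist (T^[j] z) (XI m j) ≤ 2 * tt m := by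
    intro m j
    have hcont : Tendsto (fun m' => dist (T^[j] (Z m')) (XI m j)) atTop
        (nhds (dist (T^[j] z) (XI m j))) :=
      Tendsto.dist (((hT.iterate j).tendsto z).comp hzlim) tendsto_const_nhds
    refine le_of_tendsto hcont ?_
    filter_upwards [eventually_ge_atTop m] with m' hm'
    calc dist (T^[j] (Z m')) (XI m j) ≤ 2 * tt m - tt m' := hZbound m m' hm' j
      _ ≤ 2 * tt m := by have := httpos m'; linarith
  have hAP : ∀ m j n, dist (T^[j + n * Q m] z) (T^[j] z) ≤ 4 * tt m := by
    intro m j n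
    calc dist (T^[j + n * Q m] z) (T^[j] z)
        ≤ dist (T^[j + n * Q m] z) (XI m (j + n * Q m)) + dist (XI m (j + n * Q m)) (T^[j] z) :=
          dist_triangle _ _ _
      _ ≤ 2 * tt m + 2 * tt m := by
          refine add_le_add (hzXI m _) ?_
          rw [periodic_mult (hXIper m) n j, dist_comm]
          exact hzXI m j
      _ = 4 * tt m := by ring
  have htt0 : tt 0 = ε / 16 := by simp [htt]
  have hT1 : ∀ n j : ℕ, dist (T^[j] z) (T^[n * p + j] z) < ε := by
    intro n j
    have e : XI 0 (n * p + j) = XI 0 j := by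
      rw [show n * p + j = j + n * Q 0 by rw [hQ0]; ring]
      exact periodic_mult (hXIper 0) n j
    calc dist (T^[j] z) (T^[n * p + j] z)
        ≤ dist (T^[j] z) (XI 0 j) + dist (XI 0 j) (T^[n * p + j] z) := dist_triangle _ _ _
      _ ≤ 2 * tt 0 + 2 * tt 0 := by
          refine add_le_add (hzXI 0 j) ?_
          rw [← e, dist_comm]
          exact hzXI 0 _
      _ < ε := by rw [htt0]; linarith
  have hT2 : ∀ (i : Fin k) (j : ℕ), a i ≤ j → j ≤ b i → ∀ n : ℕ,
      dist (T^[n * p + j] z) (T^[j] (x i)) < ε := by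
    intro i j hji hjb n
    have e : XI 0 (n * p + j) = T^[j] (x i) := by
      rw [show n * p + j = j + n * Q 0 by rw [hQ0]; ring]
      rw [periodic_mult (hXIper 0) n j, hXI0 j]
      exact hξ0seg i j hji hjb
    calc dist (T^[n * p + j] z) (T^[j] (x i))
        ≤ dist (T^[n * p + j] z) (XI 0 (n * p + j)) + dist (XI 0 (n * p + j)) (T^[j] (x i)) :=
          dist_triangle _ _ _
      _ ≤ 2 * tt 0 + 0 := add_le_add (hzXI 0 _) (by rw [e]; simp)
      _ < ε := by rw [htt0]; linarith
  -- the orbit closure system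
  have horb : Set.MapsTo T (orbitClosure T z) (orbitClosure T z) := by
    have h1 : Set.MapsTo T (Set.range fun n => T^[n] z) (Set.range fun n => T^[n] z) := by
      rintro y ⟨n, rfl⟩
      exact ⟨n + 1, Function.iterate_succ_apply' T n z⟩
    exact h1.closure hT
  have hzmem : z ∈ orbitClosure T z := subset_closure ⟨0, rfl⟩
  set S := Set.MapsTo.restrict T _ _ horb with hSdef
  have hiter : ∀ (n : ℕ) (w : orbitClosure T z), ((S^[n] w : X)) = T^[n] (w : X) := by
    intro n
    induction n with
    | zero => intro w; rfl
    | succ n ih =>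
      intro w
      rw [Function.iterate_succ_apply', Function.iterate_succ_apply', hSdef,
        Set.MapsTo.val_restrict_apply, ih]
  set zY : orbitClosure T z := ⟨z, hzmem⟩ with hzYdef
  refine ⟨z, ⟨horb, ?_, zY, ?_, ?_⟩, hT1, hT2⟩
  · -- equicontinuity
    intro y₀
    rw [Metric.equicontinuousAt_iff]
    intro r hr
    obtain ⟨m, hm⟩ := httsmall (r / 16) (by linarith)
    have hAPY : ∀ y : X, y ∈ orbitClosure T z →
        ∀ j n, dist (T^[j + n * Q m] y) (T^[j] y) ≤ 4 * tt m := by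
      have hclosed : IsClosed {y : X | ∀ j n, dist (T^[j + n * Q m] y) (T^[j] y) ≤ 4 * tt m} := by
        have he : {y : X | ∀ j n, dist (T^[j + n * Q m] y) (T^[j] y) ≤ 4 * tt m} =
            ⋂ (j : ℕ) (n : ℕ), {y : X | dist (T^[j + n * Q m] y) (T^[j] y) ≤ 4 * tt m} := by
          ext y; simp [Set.mem_iInter, Set.mem_setOf_eq]
        rw [he]
        refine isClosed_iInter fun j => isClosed_iInter fun n => ?_
        exact isClosed_le ((hT.iterate _).dist (hT.iterate _)) continuous_const
      have hsub : (Set.range fun c => T^[c] z) ⊆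
          {y : X | ∀ j n, dist (T^[j + n * Q m] y) (T^[j] y) ≤ 4 * tt m} := by
        rintro y ⟨c, rfl⟩
        intro j n
        have e1 : T^[j + n * Q m] (T^[c] z) = T^[(j + c) + n * Q m] z := by
          rw [← Function.iterate_add_apply]
          exact congrFun (congrArg _ (by ring)) z
        have e2 : T^[j] (T^[c] z) = T^[j + c] z := by
          rw [← Function.iterate_add_apply]
        rw [e1, e2]
        exact hAP m (j + c) n
      intro y hy j n
      exact closure_minimal hsub hclosed hy j n
    have hUC : ∀ (N : ℕ) (r' : ℝ), 0 < r' → ∃ s > (0:ℝ), ∀ i < N, ∀ u v : X, dist u v < s →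
        dist (T^[i] u) (T^[i] v) < r' := by
      intro N r' hr'
      induction N with
      | zero => exact ⟨1, one_pos, fun i hi => absurd hi (Nat.not_lt_zero i)⟩
      | succ N ihN =>
        obtain ⟨s, hs, hsN⟩ := ihN
        obtain ⟨s2, hs2, h2⟩ := Metric.uniformContinuous_iff.mp
          (CompactSpace.uniformContinuous_of_continuous (hT.iterate N)) r' hr'
        refine ⟨min s s2, lt_min hs hs2, ?_⟩
        intro i hi u v huv
        rcases Nat.lt_succ_iff_lt_or_eq.mp hi with h | h
        · exact hsN i h u v (huv.trans_le (min_le_left _ _))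
        · subst h; exact h2 (huv.trans_le (min_le_right _ _))
    obtain ⟨s, hs, hsQ⟩ := hUC (Q m) (r / 3) (by linarith)
    refine ⟨s, hs, ?_⟩
    intro y hy i
    rw [Subtype.dist_eq, hiter i, hiter i]
    have hy' : dist (y₀ : X) (y : X) < s := by
      rw [Subtype.dist_eq, dist_comm] at hy
      exact hy
    have hcomm : (i / Q m) * Q m = Q m * (i / Q m) := Nat.mul_comm _ _
    have hmaq := Nat.mod_add_div i (Q m)
    have hsplit : i % Q m + (i / Q m) * Q m = i := by omega
    have hb1 : dist (T^[i] (y₀ : X)) (T^[i % Q m] (y₀ : X)) ≤ 4 * tt m := by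
      have h0 := hAPY _ y₀.2 (i % Q m) (i / Q m)
      rwa [hsplit] at h0
    have hb3 : dist (T^[i % Q m] (y : X)) (T^[i] (y : X)) ≤ 4 * tt m := by
      rw [dist_comm]
      have h0 := hAPY _ y.2 (i % Q m) (i / Q m)
      rwa [hsplit] at h0
    have hb2 : dist (T^[i % Q m] (y₀ : X)) (T^[i % Q m] (y : X)) < r / 3 :=
      hsQ _ (Nat.mod_lt _ (hQpos m)) _ _ hy'
    have htot := dist_triangle4 (T^[i] (y₀ : X)) (T^[i % Q m] (y₀ : X))
      (T^[i % Q m] (y : X)) (T^[i] (y : X))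
    linarith
  · -- regular recurrence
    intro U hU
    rw [hzYdef, nhds_subtype_eq_comap] at hU
    obtain ⟨V, hV, hVU⟩ := Filter.mem_comap.mp hU
    obtain ⟨r, hr, hball⟩ := Metric.mem_nhds_iff.mp hV
    obtain ⟨m, hm⟩ := httsmall (r / 5) (by linarith)
    refine ⟨Q m, hQpos m, ?_⟩
    intro n
    apply hVU
    show (S^[Q m * n] zY : X) ∈ V
    rw [hiter]
    apply hball
    show T^[Q m * n] (zY : X) ∈ Metric.ball z r
    rw [Metric.mem_ball]
    have hap := hAP m 0 n
    rw [Nat.zero_add] at hap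
    rw [Nat.mul_comm]
    calc dist (T^[n * Q m] (zY : X)) z = dist (T^[n * Q m] z) (T^[0] z) := by
          rw [Function.iterate_zero_apply]
      _ ≤ 4 * tt m := hap
      _ < r := by linarith
  · -- dense orbit
    intro y
    rw [closure_subtype]
    have himg : Subtype.val '' (Set.range fun n => S^[n] zY) = Set.range fun n => T^[n] z := by
      ext w
      constructor
      · rintro ⟨w', ⟨n, rfl⟩, rfl⟩
        exact ⟨n, (hiter n zY).symm⟩
      · rintro ⟨n, rfl⟩
        exact ⟨S^[n] zY, ⟨n, rfl⟩, hiter n zY⟩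
    rw [himg]
    exact y.2
end
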